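/- arXiv:0810.3343 — 2 statements merged into one kernel-verified Lean document; each statement's English description precedes it below -/
import Mathlib

section
/- Let (Z_i)_{i=0}^{k} be an ℝ²-valued martingale (k a stopping time) with increments Δ_i = Z_i − Z_{i−1} satisfying |Δ_i| ≤ 4/√(log n) almost surely, E[Δ_i | Δ_1,…,Δ_{i−1}] = 0, and |Z_0 − Z_k| > 1/6 almost surely. Then for ℓ = 10^{−4} log n, P[k ≤ ℓ] < 1/8. -/
open MeasureTheory

lemma condexp_clm_aux {α : Type*} {m m0 : MeasurableSpace α} {μ : Measure α}
    [IsFiniteMeasure μ] (hm : m ≤ m0)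
    {E F : Type*} [NormedAddCommGroup E] [NormedSpace ℝ E] [CompleteSpace E]
    [NormedAddCommGroup F] [NormedSpace ℝ F] [CompleteSpace F]
    (T : E →L[ℝ] F) {f : α → E} (hf : Integrable f μ) :
    (fun ω => T ((μ[f|m]) ω)) =ᵐ[μ] μ[fun ω => T (f ω)|m] := by
  refine ae_eq_condExp_of_forall_setIntegral_eq hm (T.integrable_comp hf)
    (fun s _ _ => (T.integrable_comp integrable_condExp).integrableOn)
    (fun s hs hμs => ?_)
    ((T.continuous.comp_stronglyMeasurable stronglyMeasurable_condExp).aestronglyMeasurable)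
  rw [T.integral_comp_comm integrable_condExp.integrableOn,
    setIntegral_condExp hm hf hs, ← T.integral_comp_comm hf.integrableOn]

lemma martingale_stoppedProcess_real {Ω : Type*} {m0 : MeasurableSpace Ω} {μ : Measure Ω}
    [IsFiniteMeasure μ] {𝒢 : Filtration ℕ m0} {f : ℕ → Ω → ℝ} (hf : Martingale f 𝒢 μ)
    {τ : Ω → WithTop ℕ} (hτ : IsStoppingTime 𝒢 τ) :
    Martingale (stoppedProcess f τ) 𝒢 μ := by
  rw [martingale_iff]
  constructor
  · have h := (hf.neg.submartingale.stoppedProcess hτ).neg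
    have he : stoppedProcess (-f) τ = - stoppedProcess f τ := rfl
    rw [he, neg_neg] at h
    exact h
  · exact hf.submartingale.stoppedProcess hτ

lemma abs_coord_le_norm {n : ℕ} (x : EuclideanSpace ℝ (Fin n)) (j : Fin n) : |x j| ≤ ‖x‖ := by
  rw [EuclideanSpace.norm_eq, ← Real.sqrt_sq_eq_abs]
  refine Real.sqrt_le_sqrt ?_
  have := Finset.single_le_sum (f := fun i => x i ^ 2) (fun i _ => sq_nonneg _)
    (Finset.mem_univ j)
  simpa [sq_abs] using this

lemma sp_ge_nat {Ω E : Type*} {Z : ℕ → Ω → E} {k : Ω → ℕ} {i : ℕ} {ω : Ω} (h : k ω ≤ i) :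
    stoppedProcess Z (fun ω => (k ω : WithTop ℕ)) i ω = Z (k ω) ω := by
  rw [stoppedProcess_eq_of_ge (τ := fun ω => (k ω : WithTop ℕ)) (ω := ω) (WithTop.coe_le_coe.mpr h)]; rfl

lemma sp_le_nat {Ω E : Type*} {Z : ℕ → Ω → E} {k : Ω → ℕ} {i : ℕ} {ω : Ω} (h : i ≤ k ω) :
    stoppedProcess Z (fun ω => (k ω : WithTop ℕ)) i ω = Z i ω :=
  stoppedProcess_eq_of_le (WithTop.coe_le_coe.mpr h)

/-- for an ℝ²-valued martingale Z with increments bounded by 4/√(log n)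
and |Z_0 − Z_k| > 1/6 a.s. at the stopping time k, with ℓ = 10⁻⁴ log n one has
P[k ≤ ℓ] < 1/8. -/
theorem small_steps_take_long
    {Ω : Type*} {m0 : MeasurableSpace Ω} {ℙ : Measure Ω} [IsProbabilityMeasure ℙ]
    {ℱ : Filtration ℕ m0}
    (n : ℕ) (hn : 2 ≤ n)
    (Z : ℕ → Ω → EuclideanSpace ℝ (Fin 2)) (hZ : Martingale Z ℱ ℙ)
    (k : Ω → ℕ) (hk : IsStoppingTime ℱ (fun ω => (k ω : WithTop ℕ)))
    (hinc : ∀ i : ℕ, 1 ≤ i → ∀ᵐ ω ∂ℙ,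
      ‖Z i ω - Z (i - 1) ω‖ ≤ 4 / Real.sqrt (Real.log n))
    (hfar : ∀ᵐ ω ∂ℙ, 1 / 6 < ‖Z 0 ω - Z (k ω) ω‖) :
    ℙ {ω | (k ω : ℝ) ≤ 10 ^ (-(4 : ℤ)) * Real.log n} < 1 / 8 := by
  classical
  have hn1 : (1 : ℝ) < n := by exact_mod_cast Nat.lt_of_lt_of_le Nat.one_lt_two hn
  have hlog : 0 < Real.log n := Real.log_pos hn1
  set c : ℝ := 4 / Real.sqrt (Real.log n) with hc_def
  have hc0 : 0 ≤ c := by positivity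
  have hc2 : c ^ 2 = 16 / Real.log n := by
    rw [hc_def, div_pow, Real.sq_sqrt hlog.le]; norm_num
  set x : ℝ := 10 ^ (-(4 : ℤ)) * Real.log n with hx_def
  have hx0 : 0 ≤ x := by positivity
  set L : ℕ := ⌊x⌋₊ with hL_def
  set Y : ℕ → Ω → EuclideanSpace ℝ (Fin 2) := stoppedProcess Z (fun ω => (k ω : WithTop ℕ)) with hY_def
  have hYadp : StronglyAdapted ℱ Y := StronglyAdapted.stoppedProcess_of_discrete hZ.stronglyAdapted hk
  -- coordinate processes
  set f : Fin 2 → ℕ → Ω → ℝ := fun j i ω => Z i ω j with hf_def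
  have hfm : ∀ j : Fin 2, Martingale (f j) ℱ ℙ := by
    intro j
    refine ⟨fun i => (EuclideanSpace.proj j).continuous.comp_stronglyMeasurable
      (hZ.stronglyAdapted i), fun i i' hii' => ?_⟩
    have h1 := (condexp_clm_aux (ℱ.le i) (EuclideanSpace.proj (𝕜 := ℝ) j)
      (hZ.integrable i')).symm
    have h2 := (hZ.condExp_ae_eq hii').fun_comp (EuclideanSpace.proj (𝕜 := ℝ) j)
    exact h1.trans h2
  have hgm : ∀ j : Fin 2, Martingale (stoppedProcess (f j) (fun ω => (k ω : WithTop ℕ))) ℱ ℙ :=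
    fun j => martingale_stoppedProcess_real (hfm j) hk
  have hgY : ∀ j i ω, stoppedProcess (f j) (fun ω => (k ω : WithTop ℕ)) i ω = Y i ω j := fun j i ω => rfl
  -- increment bound on stopped process
  have hYinc : ∀ i : ℕ, ∀ᵐ ω ∂ℙ, ‖Y (i + 1) ω - Y i ω‖ ≤ c := by
    intro i
    filter_upwards [hinc (i + 1) (Nat.le_add_left 1 i)] with ω hω
    by_cases h : k ω ≤ i
    · have h1 : Y (i + 1) ω = Z (k ω) ω := sp_ge_nat (h.trans (Nat.le_succ i))
      have h2 : Y i ω = Z (k ω) ω := sp_ge_nat h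
      simp [h1, h2, hc0]
    · have h' : i + 1 ≤ k ω := Nat.succ_le_of_lt (Nat.lt_of_not_le h)
      have h1 : Y (i + 1) ω = Z (i + 1) ω := sp_le_nat h'
      have h2 : Y i ω = Z i ω := sp_le_nat (Nat.le_of_succ_le h')
      rw [h1, h2]
      simpa using hω
  -- bound on distance from start
  have hYbound : ∀ i : ℕ, ∀ᵐ ω ∂ℙ, ‖Y i ω - Y 0 ω‖ ≤ i * c := by
    intro i
    induction i with
    | zero => filter_upwards with ω; simp
    | succ i ih =>
      filter_upwards [ih, hYinc i] with ω h1 h2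
      have : Y (i + 1) ω - Y 0 ω = (Y i ω - Y 0 ω) + (Y (i + 1) ω - Y i ω) := by abel
      rw [this]
      calc ‖(Y i ω - Y 0 ω) + (Y (i + 1) ω - Y i ω)‖
          ≤ ‖Y i ω - Y 0 ω‖ + ‖Y (i + 1) ω - Y i ω‖ := norm_add_le _ _
        _ ≤ i * c + c := add_le_add h1 h2
        _ = (i + 1 : ℕ) * c := by push_cast; ring
  -- measurability facts
  have hYm : ∀ i, AEStronglyMeasurable (Y i) ℙ :=
    fun i => ((hYadp i).mono (ℱ.le i)).aestronglyMeasurable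
  -- cross terms vanish
  have hcross : ∀ i : ℕ, ∀ j : Fin 2,
      ∫ ω, (Y i ω j - Y 0 ω j) * (Y (i + 1) ω j - Y i ω j) ∂ℙ = 0 := by
    intro i j
    set a : Ω → ℝ := fun ω => Y i ω j - Y 0 ω j with ha_def
    set b : Ω → ℝ := fun ω => Y (i + 1) ω j - Y i ω j with hb_def
    have ha_sm : StronglyMeasurable[ℱ i] a := by
      have h1 : StronglyMeasurable[ℱ i] (fun ω => Y i ω j) :=
        (EuclideanSpace.proj j).continuous.comp_stronglyMeasurable (hYadp i)
      have h2 : StronglyMeasurable[ℱ i] (fun ω => Y 0 ω j) :=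
        ((EuclideanSpace.proj j).continuous.comp_stronglyMeasurable (hYadp 0)).mono
          (ℱ.mono (Nat.zero_le i))
      exact h1.sub h2
    have ha_bound : ∀ᵐ ω ∂ℙ, ‖a ω‖ ≤ i * c := by
      filter_upwards [hYbound i] with ω hω
      calc ‖a ω‖ = |(Y i ω - Y 0 ω) j| := by simp [ha_def]
        _ ≤ ‖Y i ω - Y 0 ω‖ := abs_coord_le_norm _ j
        _ ≤ i * c := hω
    have hb_bound : ∀ᵐ ω ∂ℙ, ‖b ω‖ ≤ c := by
      filter_upwards [hYinc i] with ω hω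
      calc ‖b ω‖ = |(Y (i + 1) ω - Y i ω) j| := by simp [hb_def]
        _ ≤ ‖Y (i + 1) ω - Y i ω‖ := abs_coord_le_norm _ j
        _ ≤ c := hω
    have hb_int : Integrable b ℙ :=
      ((hgm j).integrable (i + 1)).sub ((hgm j).integrable i)
    have hb_cond : ℙ[b|ℱ i] =ᵐ[ℙ] 0 := by
      have h1 : ℙ[b|ℱ i] =ᵐ[ℙ] ℙ[stoppedProcess (f j) (fun ω => (k ω : WithTop ℕ)) (i+1)|ℱ i]
          - ℙ[stoppedProcess (f j) (fun ω => (k ω : WithTop ℕ)) i|ℱ i] :=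
        condExp_sub ((hgm j).integrable (i + 1)) ((hgm j).integrable i) _
      have h2 := (hgm j).condExp_ae_eq (Nat.le_succ i)
      have h3 : ℙ[stoppedProcess (f j) (fun ω => (k ω : WithTop ℕ)) i|ℱ i] = stoppedProcess (f j) (fun ω => (k ω : WithTop ℕ)) i :=
        condExp_of_stronglyMeasurable (ℱ.le i) ((hgm j).stronglyAdapted i)
          ((hgm j).integrable i)
      filter_upwards [h1, h2] with ω hω1 hω2
      simp only [Pi.sub_apply] at hω1
      simp [hω1, hω2, h3]
    have hab_int : Integrable (a * b) ℙ :=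
      hb_int.bdd_mul (ha_sm.mono (ℱ.le i)).aestronglyMeasurable ha_bound
    have h1 : ∫ ω, (a * b) ω ∂ℙ = ∫ ω, (ℙ[a * b|ℱ i]) ω ∂ℙ :=
      (integral_condExp (ℱ.le i)).symm
    have h2 : ℙ[a * b|ℱ i] =ᵐ[ℙ] a * ℙ[b|ℱ i] :=
      condExp_stronglyMeasurable_mul_of_bound (ℱ.le i) ha_sm hb_int (i * c) ha_bound
    have h3 : (a * ℙ[b|ℱ i] : Ω → ℝ) =ᵐ[ℙ] 0 := by
      filter_upwards [hb_cond] with ω hω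
      simp [hω]
    calc ∫ ω, a ω * b ω ∂ℙ = ∫ ω, (ℙ[a * b|ℱ i]) ω ∂ℙ := h1
      _ = ∫ ω, (0 : Ω → ℝ) ω ∂ℙ := integral_congr_ae (h2.trans h3)
      _ = 0 := by simp
  -- second moment bound by induction
  have hsq_int : ∀ i : ℕ, Integrable (fun ω => ‖Y i ω - Y 0 ω‖ ^ 2) ℙ := by
    intro i
    refine (integrable_const ((i * c) ^ 2)).mono'
      (((hYm i).sub (hYm 0)).norm.pow 2) ?_
    filter_upwards [hYbound i] with ω hω
    have h0 : (0:ℝ) ≤ ‖Y i ω - Y 0 ω‖ := norm_nonneg _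
    simp only [norm_pow, norm_norm]
    exact pow_le_pow_left₀ h0 hω 2
  have hmain : ∀ i : ℕ, ∫ ω, ‖Y i ω - Y 0 ω‖ ^ 2 ∂ℙ ≤ i * c ^ 2 := by
    intro i
    induction i with
    | zero => simp
    | succ i ih =>
      have hinner_int : Integrable
          (fun ω => (inner ℝ (Y i ω - Y 0 ω) (Y (i+1) ω - Y i ω) : ℝ)) ℙ := by
        refine (integrable_const ((i * c) * c)).mono'
          (((hYm i).sub (hYm 0)).inner ((hYm (i+1)).sub (hYm i))) ?_
        filter_upwards [hYbound i, hYinc i] with ω h1 h2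
        calc ‖(inner ℝ (Y i ω - Y 0 ω) (Y (i+1) ω - Y i ω) : ℝ)‖
            ≤ ‖Y i ω - Y 0 ω‖ * ‖Y (i+1) ω - Y i ω‖ := norm_inner_le_norm _ _
          _ ≤ (i * c) * c := by
              refine mul_le_mul h1 h2 (norm_nonneg _) ?_
              positivity
      have hb_sq_int : Integrable (fun ω => ‖Y (i+1) ω - Y i ω‖ ^ 2) ℙ := by
        refine (integrable_const (c ^ 2)).mono'
          (((hYm (i+1)).sub (hYm i)).norm.pow 2) ?_
        filter_upwards [hYinc i] with ω hω
        simp only [norm_pow, norm_norm]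
        exact pow_le_pow_left₀ (norm_nonneg _) hω 2
      have hexpand : ∀ ω, ‖Y (i+1) ω - Y 0 ω‖ ^ 2
          = ‖Y i ω - Y 0 ω‖ ^ 2
            + 2 * (inner ℝ (Y i ω - Y 0 ω) (Y (i+1) ω - Y i ω) : ℝ)
            + ‖Y (i+1) ω - Y i ω‖ ^ 2 := by
        intro ω
        have : Y (i+1) ω - Y 0 ω = (Y i ω - Y 0 ω) + (Y (i+1) ω - Y i ω) := by abel
        rw [this, @norm_add_sq_real]
      have hsplit : ∫ ω, ‖Y (i+1) ω - Y 0 ω‖ ^ 2 ∂ℙ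
          = ∫ ω, ‖Y i ω - Y 0 ω‖ ^ 2 ∂ℙ
            + 2 * ∫ ω, (inner ℝ (Y i ω - Y 0 ω) (Y (i+1) ω - Y i ω) : ℝ) ∂ℙ
            + ∫ ω, ‖Y (i+1) ω - Y i ω‖ ^ 2 ∂ℙ := by
        have hAB : Integrable (fun ω => ‖Y i ω - Y 0 ω‖ ^ 2
            + 2 * (inner ℝ (Y i ω - Y 0 ω) (Y (i+1) ω - Y i ω) : ℝ)) ℙ :=
          (hsq_int i).add (hinner_int.const_mul 2)
        simp_rw [hexpand]
        rw [integral_add hAB hb_sq_int,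
          integral_add (hsq_int i) (hinner_int.const_mul 2), integral_const_mul]
      have hinner_zero : ∫ ω, (inner ℝ (Y i ω - Y 0 ω) (Y (i+1) ω - Y i ω) : ℝ) ∂ℙ = 0 := by
        have hcoord : ∀ ω, (inner ℝ (Y i ω - Y 0 ω) (Y (i+1) ω - Y i ω) : ℝ)
            = ∑ j : Fin 2, (Y i ω j - Y 0 ω j) * (Y (i+1) ω j - Y i ω j) := by
          intro ω
          rw [PiLp.inner_apply]
          congr 1
          funext j
          simp [mul_comm]
        simp_rw [hcoord]
        rw [integral_finset_sum]
        · exact Finset.sum_eq_zero fun j _ => hcross i j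
        · intro j _
          refine (integrable_const ((i * c) * c)).mono' ?_ ?_
          · have h1 : AEStronglyMeasurable (fun ω => Y i ω j - Y 0 ω j) ℙ :=
              (((EuclideanSpace.proj (𝕜 := ℝ) j).continuous.comp_aestronglyMeasurable
                (hYm i))).sub
              (((EuclideanSpace.proj (𝕜 := ℝ) j).continuous.comp_aestronglyMeasurable (hYm 0)))
            have h2 : AEStronglyMeasurable (fun ω => Y (i+1) ω j - Y i ω j) ℙ :=
              (((EuclideanSpace.proj (𝕜 := ℝ) j).continuous.comp_aestronglyMeasurable
                (hYm (i+1)))).sub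
              (((EuclideanSpace.proj (𝕜 := ℝ) j).continuous.comp_aestronglyMeasurable (hYm i)))
            exact h1.mul h2
          · filter_upwards [hYbound i, hYinc i] with ω h1 h2
            have e1 : |Y i ω j - Y 0 ω j| ≤ i * c :=
              le_trans (abs_coord_le_norm (Y i ω - Y 0 ω) j) h1
            have e2 : |Y (i+1) ω j - Y i ω j| ≤ c :=
              le_trans (abs_coord_le_norm (Y (i+1) ω - Y i ω) j) h2
            calc ‖(Y i ω j - Y 0 ω j) * (Y (i+1) ω j - Y i ω j)‖
                = |Y i ω j - Y 0 ω j| * |Y (i+1) ω j - Y i ω j| := by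
                  rw [Real.norm_eq_abs, abs_mul]
              _ ≤ (i * c) * c := mul_le_mul e1 e2 (abs_nonneg _)
                  (by positivity)
      have hb_sq_le : ∫ ω, ‖Y (i+1) ω - Y i ω‖ ^ 2 ∂ℙ ≤ c ^ 2 := by
        have : ∫ ω, ‖Y (i+1) ω - Y i ω‖ ^ 2 ∂ℙ ≤ ∫ _ω, c ^ 2 ∂ℙ := by
          refine integral_mono_ae hb_sq_int (integrable_const _) ?_
          filter_upwards [hYinc i] with ω hω
          exact pow_le_pow_left₀ (norm_nonneg _) hω 2
        simpa using this
      rw [hsplit, hinner_zero]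
      push_cast
      nlinarith [ih, hb_sq_le]
  -- Markov
  set S : Set Ω := {ω | (k ω : ℝ) ≤ x} with hS_def
  have hSeq : S = {ω | k ω ≤ L} := by
    ext ω
    simp only [hS_def, Set.mem_setOf_eq, hL_def]
    exact (Nat.le_floor_iff hx0).symm
  have hSmeas : MeasurableSet S := by
    rw [hSeq]
    exact ℱ.le L _ (by simpa using hk.measurableSet_le L)
  have hptwise : ∀ᵐ ω ∂ℙ, S.indicator (fun _ => (1/6 : ℝ) ^ 2) ω ≤ ‖Y L ω - Y 0 ω‖ ^ 2 := by
    filter_upwards [hfar] with ω hω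
    by_cases hωS : ω ∈ S
    · rw [Set.indicator_of_mem hωS]
      have hkL : k ω ≤ L := by rwa [hSeq] at hωS
      have h1 : Y L ω = Z (k ω) ω := sp_ge_nat hkL
      have h2 : Y 0 ω = Z 0 ω := sp_le_nat (Nat.zero_le _)
      have h3 : ‖Y L ω - Y 0 ω‖ = ‖Z 0 ω - Z (k ω) ω‖ := by
        rw [h1, h2, norm_sub_rev]
      rw [h3]
      have h16 : (0:ℝ) ≤ 1/6 := by norm_num
      exact pow_le_pow_left₀ h16 hω.le 2
    · rw [Set.indicator_of_notMem hωS]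
      positivity
  have hint_ind : ∫ ω, S.indicator (fun _ => (1/6 : ℝ) ^ 2) ω ∂ℙ
      = (ℙ S).toReal * (1/6 : ℝ) ^ 2 := by
    rw [integral_indicator hSmeas, setIntegral_const, smul_eq_mul, measureReal_def]
  have hmarkov : (ℙ S).toReal * (1/6 : ℝ) ^ 2 ≤ L * c ^ 2 := by
    rw [← hint_ind]
    refine le_trans (integral_mono_ae ?_ (hsq_int L) hptwise) (hmain L)
    exact (integrable_const ((1/6:ℝ)^2)).indicator hSmeas
  have hLx : (L : ℝ) ≤ x := Nat.floor_le hx0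
  have hfinal : (ℙ S).toReal < 1 / 8 := by
    have h1 : (L : ℝ) * c ^ 2 ≤ x * (16 / Real.log n) := by
      rw [← hc2]
      exact mul_le_mul_of_nonneg_right hLx (by positivity)
    have h2 : x * (16 / Real.log n) = 10 ^ (-(4:ℤ)) * 16 := by
      rw [hx_def]
      field_simp
    have h3 : (ℙ S).toReal * (1/6 : ℝ) ^ 2 ≤ 10 ^ (-(4:ℤ)) * 16 := by
      rw [← h2]
      exact le_trans hmarkov h1
    have h4 : (10:ℝ) ^ (-(4:ℤ)) = 1/10000 := by norm_num
    rw [h4] at h3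
    nlinarith [h3]
  have hne : ℙ S ≠ ⊤ := measure_ne_top ℙ S
  rw [show ℙ {ω | (k ω : ℝ) ≤ 10 ^ (-(4 : ℤ)) * Real.log n} = ℙ S from rfl]
  rw [← ENNReal.toReal_lt_toReal hne (by norm_num)]
  convert hfinal using 1
  norm_num
end

section
/- Let Ω ⊂ ℝ^d be α-thick with constant C. Then for every x ∈ ∂Ω there exists a Borel measure μ_x on ℝ^d such that: (1) μ_x(Ω) = 0; (2) μ_x(B(y,r)) ≤ r^{d−α} for all y ∈ ℝ^d, r > 0; (3) μ_x(B(x,r)) ≥ c·r^{d−α} for all r < 1, where c = c(α, d, C) > 0 depends only on α, d, C. -/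
set_option maxHeartbeats 1000000


open MeasureTheory Metric Set
open scoped ENNReal NNReal

/-- β-dimensional Hausdorff content: infimum of Σ r_j^β over countable covers
of K by balls B(x_j, r_j). -/
noncomputable def hausdorffContent (d : ℕ) (β : ℝ)
    (K : Set (EuclideanSpace ℝ (Fin d))) : ℝ≥0∞ :=
  ⨅ (f : ℕ → EuclideanSpace ℝ (Fin d) × ℝ)
    (_ : K ⊆ ⋃ j, ball (f j).1 (f j).2),
    ∑' j, ENNReal.ofReal ((f j).2 ^ β)

/-- A domain Ω ⊂ ℝ^d is α-thick with constant C if for every x ∈ ∂Ω and r < 1,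
H^{d−α}(B(x,r) \ Ω) ≥ C r^{d−α}. -/
def IsAlphaThick (d : ℕ) (α C : ℝ) (Ω : Set (EuclideanSpace ℝ (Fin d))) : Prop :=
  ∀ x ∈ frontier Ω, ∀ r : ℝ, 0 < r → r < 1 →
    ENNReal.ofReal (C * r ^ ((d : ℝ) - α)) ≤ hausdorffContent d ((d : ℝ) - α) (ball x r \ Ω)

open Filter
open scoped Topology

namespace FrostmanAux

noncomputable section

attribute [local instance] Classical.propDecidable

variable {d : ℕ}

abbrev Euc (d : ℕ) := EuclideanSpace ℝ (Fin d)

/-! ### Hausdorff content lemmas -/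

lemma content_le_cover {β : ℝ} {A : Set (Euc d)} (f : ℕ → Euc d × ℝ)
    (hf : A ⊆ ⋃ j, ball (f j).1 (f j).2) :
    hausdorffContent d β A ≤ ∑' j, ENNReal.ofReal ((f j).2 ^ β) :=
  iInf₂_le f hf

lemma content_mono {β : ℝ} {A B : Set (Euc d)} (h : A ⊆ B) :
    hausdorffContent d β A ≤ hausdorffContent d β B :=
  le_iInf₂ fun f hf => iInf₂_le f (h.trans hf)

lemma exists_cover_of_lt {β : ℝ} {A : Set (Euc d)} {c : ℝ≥0∞}
    (h : hausdorffContent d β A < c) :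
    ∃ f : ℕ → Euc d × ℝ, (A ⊆ ⋃ j, ball (f j).1 (f j).2) ∧
      ∑' j, ENNReal.ofReal ((f j).2 ^ β) < c := by
  have := h
  rw [hausdorffContent, iInf_lt_iff] at this
  obtain ⟨f, hf⟩ := this
  rw [iInf_lt_iff] at hf
  obtain ⟨hc, hlt⟩ := hf
  exact ⟨f, hc, hlt⟩

lemma content_le_of_subset_ball {β : ℝ} (hβ : 0 < β) {A : Set (Euc d)} {z : Euc d} {r : ℝ}
    (h : A ⊆ ball z r) : hausdorffContent d β A ≤ ENNReal.ofReal (r ^ β) := by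
  have := content_le_cover (A := A) (β := β) (fun j => if j = 0 then (z, r) else (z, 0)) ?_
  · refine this.trans ?_
    rw [tsum_eq_single 0]
    · simp
    · intro j hj
      simp [hj, Real.zero_rpow hβ.ne']
  · intro a ha
    exact mem_iUnion.2 ⟨0, by simpa using h ha⟩

lemma content_empty {β : ℝ} (hβ : 0 < β) : hausdorffContent d β (∅ : Set (Euc d)) = 0 := by
  refine le_antisymm ?_ zero_le
  have := content_le_of_subset_ball (d := d) hβ (A := ∅) (z := 0) (r := 0) (empty_subset _)
  simpa [Real.zero_rpow hβ.ne'] using this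

lemma content_union_le {β : ℝ} (A B : Set (Euc d)) :
    hausdorffContent d β (A ∪ B) ≤ hausdorffContent d β A + hausdorffContent d β B := by
  rcases eq_or_ne (hausdorffContent d β A) ∞ with hA | hA
  · simp [hA]
  rcases eq_or_ne (hausdorffContent d β B) ∞ with hB | hB
  · simp [hB]
  refine ENNReal.le_of_forall_pos_le_add fun ε hε _ => ?_
  have hεh : (0 : ℝ≥0∞) < ε / 2 := by
    simp [ENNReal.div_pos_iff, hε.ne']
  obtain ⟨f, hfc, hf⟩ := exists_cover_of_lt
    (lt_of_lt_of_le (ENNReal.lt_add_right hA hεh.ne') le_rfl)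
  obtain ⟨g, hgc, hg⟩ := exists_cover_of_lt
    (lt_of_lt_of_le (ENNReal.lt_add_right hB hεh.ne') le_rfl)
  set F : ℕ → Euc d × ℝ := fun n => if Even n then f (n / 2) else g (n / 2) with hF
  have hcov : A ∪ B ⊆ ⋃ j, ball (F j).1 (F j).2 := by
    rintro a (ha | ha)
    · obtain ⟨j, hj⟩ := mem_iUnion.1 (hfc ha)
      refine mem_iUnion.2 ⟨2 * j, ?_⟩
      have : F (2 * j) = f j := by simp [hF, Nat.mul_div_cancel_left]
      rw [this]; exact hj
    · obtain ⟨j, hj⟩ := mem_iUnion.1 (hgc ha)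
      refine mem_iUnion.2 ⟨2 * j + 1, ?_⟩
      have : F (2 * j + 1) = g j := by
        have : ¬ Even (2 * j + 1) := by simp [Nat.even_add_one, Nat.even_mul]
        simp [hF, this, Nat.mul_add_div, Nat.mul_div_cancel_left]
      rw [this]; exact hj
  have hsum : ∑' j, ENNReal.ofReal ((F j).2 ^ β)
      = (∑' j, ENNReal.ofReal ((f j).2 ^ β)) + ∑' j, ENNReal.ofReal ((g j).2 ^ β) := by
    rw [← tsum_even_add_odd ENNReal.summable ENNReal.summable]
    congr 1
    · refine tsum_congr fun j => ?_
      have : F (2 * j) = f j := by simp [hF, Nat.mul_div_cancel_left]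
      rw [this]
    · refine tsum_congr fun j => ?_
      have : F (2 * j + 1) = g j := by
        have : ¬ Even (2 * j + 1) := by simp [Nat.even_add_one, Nat.even_mul]
        simp [hF, this, Nat.mul_add_div, Nat.mul_div_cancel_left]
      rw [this]
  calc hausdorffContent d β (A ∪ B) ≤ ∑' j, ENNReal.ofReal ((F j).2 ^ β) :=
        content_le_cover F hcov
    _ = _ + _ := hsum
    _ ≤ (hausdorffContent d β A + ε / 2) + (hausdorffContent d β B + ε / 2) :=
        add_le_add hf.le hg.le
    _ = hausdorffContent d β A + hausdorffContent d β B + ε := by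
        rw [add_add_add_comm, ENNReal.add_halves]

lemma content_finset_le {β : ℝ} (hβ : 0 < β) {ι : Type*} (s : Finset ι) (f : ι → Set (Euc d)) :
    hausdorffContent d β (⋃ i ∈ s, f i) ≤ ∑ i ∈ s, hausdorffContent d β (f i) := by
  classical
  induction s using Finset.induction with
  | empty => simp [content_empty hβ]
  | @insert a s' h ih =>
      rw [Finset.set_biUnion_insert, Finset.sum_insert h]
      exact (content_union_le _ _).trans (add_le_add le_rfl ih)


/-! ### Dyadic cubes -/

def cube (n : ℤ) (k : Fin d → ℤ) : Set (Euc d) :=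
  {y | ∀ i, (k i : ℝ) ≤ 2 ^ n * y i ∧ 2 ^ n * y i < k i + 1}

def cubeCl (n : ℤ) (k : Fin d → ℤ) : Set (Euc d) :=
  {y | ∀ i, (k i : ℝ) ≤ 2 ^ n * y i ∧ 2 ^ n * y i ≤ k i + 1}

lemma cube_subset_cubeCl {n : ℤ} {k : Fin d → ℤ} : cube n k ⊆ cubeCl (d := d) n k :=
  fun y hy i => ⟨(hy i).1, (hy i).2.le⟩

lemma isClosed_cubeCl {n : ℤ} {k : Fin d → ℤ} : IsClosed (cubeCl (d := d) n k) := by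
  have : cubeCl (d := d) n k =
      ⋂ i, ((fun y : Euc d => 2 ^ n * y i) ⁻¹' Icc (k i : ℝ) ((k i : ℝ) + 1)) := by
    ext y; simp only [cubeCl, mem_setOf_eq, mem_iInter, mem_preimage, mem_Icc]
  rw [this]
  refine isClosed_iInter fun i => IsClosed.preimage ?_ isClosed_Icc
  exact continuous_const.mul ((EuclideanSpace.proj i).continuous)

lemma mem_cube_iff_floor {n : ℤ} {k : Fin d → ℤ} {y : Euc d} :
    y ∈ cube n k ↔ ∀ i, ⌊(2:ℝ) ^ n * y i⌋ = k i := by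
  unfold cube
  refine forall_congr' fun i => ?_
  rw [Int.floor_eq_iff]

def cbit (b : Bool) : ℤ := if b then 1 else 0

def childIdx (c : Fin d → Bool) (k : Fin d → ℤ) : Fin d → ℤ := fun i => 2 * k i + cbit (c i)

lemma childIdx_inj {c c' : Fin d → Bool} {k k' : Fin d → ℤ}
    (h : childIdx c k = childIdx c' k') : c = c' ∧ k = k' := by
  constructor
  · funext i
    have := congrFun h i
    unfold childIdx cbit at this
    cases hc : c i <;> cases hc' : c' i <;> simp [hc, hc'] at this ⊢ <;> omega
  · funext i
    have := congrFun h i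
    unfold childIdx cbit at this
    cases hc : c i <;> cases hc' : c' i <;> simp [hc, hc'] at this <;> omega

lemma child_subset {n : ℤ} {k : Fin d → ℤ} {c : Fin d → Bool} :
    cube (n + 1) (childIdx c k) ⊆ cube (d := d) n k := by
  intro y hy i
  have h := hy i
  unfold childIdx at h
  have h2 : (2:ℝ) ^ (n + 1) = 2 * 2 ^ n := by
    rw [zpow_add₀ (two_ne_zero) n 1]; ring
  rw [h2] at h
  have hb : (0:ℝ) ≤ (cbit (c i) : ℝ) ∧ (cbit (c i) : ℝ) ≤ 1 := by
    unfold cbit; cases c i <;> norm_num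
  push_cast at h
  constructor <;> nlinarith [h.1, h.2, hb.1, hb.2]

lemma cube_eq_iUnion_children {n : ℤ} {k : Fin d → ℤ} :
    cube (d := d) n k = ⋃ c : Fin d → Bool, cube (n + 1) (childIdx c k) := by
  apply Subset.antisymm
  · intro y hy
    refine mem_iUnion.2 ⟨fun i => if (2 * k i + 1 : ℝ) ≤ 2 ^ (n+1) * y i then true else false, ?_⟩
    intro i
    have h := hy i
    have h2 : (2:ℝ) ^ (n + 1) = 2 * 2 ^ n := by
      rw [zpow_add₀ (two_ne_zero) n 1]; ring
    unfold childIdx cbit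
    by_cases hc : (2 * k i + 1 : ℝ) ≤ 2 ^ (n+1) * y i <;>
      simp only [hc, if_true, if_false] <;> push_cast <;> rw [h2] <;>
      [skip; skip] <;> constructor <;> (try push_neg at hc) <;> rw [h2] at hc <;> nlinarith [h.1, h.2]
  · exact iUnion_subset fun c => child_subset

def center (n : ℤ) (k : Fin d → ℤ) : Euc d := WithLp.toLp 2 (fun i => ((k i : ℝ) + 2⁻¹) * 2 ^ (-n))

lemma center_mem {n : ℤ} {k : Fin d → ℤ} : center n k ∈ cube (d := d) n k := by
  intro i
  have h2 : (2:ℝ) ^ n ≠ 0 := by positivity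
  have : (2:ℝ) ^ n * center n k i = (k i : ℝ) + 2⁻¹ := by
    show (2:ℝ) ^ n * (((k i : ℝ) + 2⁻¹) * 2 ^ (-n)) = _
    rw [zpow_neg, mul_comm ((k i : ℝ) + 2⁻¹) _, ← mul_assoc, mul_inv_cancel₀ h2, one_mul]
  rw [this]
  constructor <;> norm_num

lemma coord_dist_le (y z : Euc d) (i : Fin d) : dist (y i) (z i) ≤ dist y z := by
  rw [EuclideanSpace.dist_eq]
  have h1 : dist (y i) (z i) ^ 2 ≤ ∑ j, dist (y j) (z j) ^ 2 := by
    refine Finset.single_le_sum (f := fun j => dist (y j) (z j) ^ 2) ?_ (Finset.mem_univ i)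
    intro j _; positivity
  calc dist (y i) (z i) = Real.sqrt (dist (y i) (z i) ^ 2) := by
        rw [Real.sqrt_sq dist_nonneg]
    _ ≤ _ := Real.sqrt_le_sqrt h1

lemma dist_le_of_mem_cubeCl {n : ℤ} {k : Fin d → ℤ} {y z : Euc d}
    (hy : y ∈ cubeCl n k) (hz : z ∈ cubeCl n k) :
    dist y z ≤ Real.sqrt d * 2 ^ (-n) := by
  have hs : (0:ℝ) ≤ 2 ^ (-n : ℤ) := by positivity
  have h2 : (0:ℝ) < 2 ^ n := by positivity
  have key : ∀ i, dist (y i) (z i) ≤ 2 ^ (-n : ℤ) := by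
    intro i
    have hyi := hy i; have hzi := hz i
    have hyz : y i - z i = (2 ^ n * y i - 2 ^ n * z i) * 2 ^ (-n : ℤ) := by
      rw [zpow_neg, mul_comm, ← mul_sub, ← mul_assoc, inv_mul_cancel₀ h2.ne', one_mul]
    rw [Real.dist_eq, hyz, abs_mul, abs_of_nonneg hs]
    have : |2 ^ n * y i - 2 ^ n * z i| ≤ 1 := by
      rw [abs_le]; constructor <;> linarith [hyi.1, hyi.2, hzi.1, hzi.2]
    nlinarith
  rw [EuclideanSpace.dist_eq]
  have hsum : ∑ i, dist (y i) (z i) ^ 2 ≤ (d : ℝ) * (2 ^ (-n : ℤ)) ^ 2 := by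
    calc ∑ i, dist (y i) (z i) ^ 2 ≤ ∑ _i : Fin d, (2 ^ (-n : ℤ) : ℝ) ^ 2 := by
          refine Finset.sum_le_sum fun i _ => ?_
          have := key i
          nlinarith [dist_nonneg (x := y i) (y := z i)]
      _ = (d : ℝ) * (2 ^ (-n : ℤ)) ^ 2 := by simp [mul_comm]
  calc Real.sqrt (∑ i, dist (y i) (z i) ^ 2) ≤ Real.sqrt ((d : ℝ) * (2 ^ (-n : ℤ)) ^ 2) :=
        Real.sqrt_le_sqrt hsum
    _ = Real.sqrt d * 2 ^ (-n : ℤ) := by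
        rw [Real.sqrt_mul (by positivity), Real.sqrt_sq hs]

lemma cube_subset_ball {n : ℤ} {k : Fin d → ℤ} :
    cubeCl (d := d) n k ⊆ ball (center n k) ((Real.sqrt d + 1) * 2 ^ (-n)) := by
  intro y hy
  rw [mem_ball]
  calc dist y (center n k) ≤ Real.sqrt d * 2 ^ (-n) :=
        dist_le_of_mem_cubeCl hy (cube_subset_cubeCl center_mem)
    _ < (Real.sqrt d + 1) * 2 ^ (-n) := by
        have : (0:ℝ) < 2 ^ (-n : ℤ) := by positivity
        nlinarith

lemma exists_int_scale {ρ : ℝ} (hρ : 0 < ρ) : ∃ g : ℤ, ρ ≤ 2 ^ (-g) ∧ (2:ℝ) ^ (-g) ≤ 2 * ρ := by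
  refine ⟨-(Int.log 2 ρ + 1), ?_, ?_⟩
  · rw [neg_neg]
    exact (Int.lt_zpow_succ_log_self (by norm_num) ρ).le
  · rw [neg_neg, zpow_add₀ (two_ne_zero : (2:ℝ) ≠ 0)]
    have := Int.zpow_log_le_self (b := 2) (r := ρ) (by norm_num) hρ
    norm_num at this ⊢
    linarith

lemma cube_index_mem_Icc {g : ℤ} {ρ : ℝ} (hρ : 0 < ρ) (hs : ρ ≤ 2 ^ (-g)) (y : Euc d)
    {k : Fin d → ℤ} (h : (cubeCl g k ∩ closedBall y ρ).Nonempty) :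
    k ∈ Finset.Icc (fun i => ⌊(2:ℝ) ^ g * y i⌋ - 2) (fun i => ⌊(2:ℝ) ^ g * y i⌋ + 2) := by
  obtain ⟨z, hz, hzb⟩ := h
  rw [Finset.mem_Icc]
  have h2 : (0:ℝ) < 2 ^ g := by positivity
  have hgρ : (2:ℝ) ^ g * ρ ≤ 1 := by
    have := mul_le_mul_of_nonneg_left hs h2.le
    rwa [zpow_neg, mul_inv_cancel₀ h2.ne'] at this
  have hdz : ∀ i, |z i - y i| ≤ ρ := by
    intro i
    have h1 : dist (z i) (y i) ≤ dist z y := coord_dist_le z y i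
    have h2' : dist z y ≤ ρ := mem_closedBall.1 hzb
    rw [Real.dist_eq] at h1
    linarith
  constructor <;> intro i <;> have hzi := hz i <;> have habs := abs_le.1 (hdz i) <;>
    have hfl : (⌊(2:ℝ) ^ g * y i⌋ : ℝ) ≤ 2 ^ g * y i := Int.floor_le _ <;>
    have hfl2 : (2:ℝ) ^ g * y i < ⌊(2:ℝ) ^ g * y i⌋ + 1 := Int.lt_floor_add_one _
  · -- lower bound: ⌊v⌋ - 2 ≤ k i
    have hzy : (2:ℝ) ^ g * z i ≥ 2 ^ g * y i - 2 ^ g * ρ := by nlinarith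
    have : ((⌊(2:ℝ) ^ g * y i⌋ - 2 : ℤ) : ℝ) ≤ (k i : ℝ) := by push_cast; nlinarith [hzi.1, hzi.2]
    exact_mod_cast this
  · -- upper bound: k i ≤ ⌊v⌋ + 2
    have hzy : (2:ℝ) ^ g * z i ≤ 2 ^ g * y i + 2 ^ g * ρ := by nlinarith
    have : (k i : ℝ) ≤ ((⌊(2:ℝ) ^ g * y i⌋ + 2 : ℤ) : ℝ) := by push_cast; nlinarith [hzi.1, hzi.2]
    exact_mod_cast this

lemma card_Icc_5 (y : Euc d) (g : ℤ) :
    (Finset.Icc (fun i => ⌊(2:ℝ) ^ g * y i⌋ - 2) (fun i => ⌊(2:ℝ) ^ g * y i⌋ + 2)).card = 5 ^ d := by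
  rw [Pi.card_Icc]
  have : ∀ i : Fin d, (Finset.Icc (⌊(2:ℝ) ^ g * y i⌋ - 2) (⌊(2:ℝ) ^ g * y i⌋ + 2)).card = 5 := by
    intro i; rw [Int.card_Icc]; omega
  simp [this]

def cubeOf (n : ℤ) (y : Euc d) : Fin d → ℤ := fun i => ⌊(2:ℝ) ^ n * y i⌋

lemma mem_cubeOf (n : ℤ) (y : Euc d) : y ∈ cube n (cubeOf n y) :=
  mem_cube_iff_floor.2 fun _ => rfl


/-! ### The capacity function -/

def capn (β : ℝ) (n : ℤ) : ℝ≥0 := ((2:ℝ≥0) ^ (-n)) ^ β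

lemma coe_capn (β : ℝ) (n : ℤ) : ((capn β n : ℝ≥0) : ℝ≥0∞) = ENNReal.ofReal (((2:ℝ) ^ (-n)) ^ β) := by
  unfold capn
  rw [ENNReal.ofReal]
  congr 1
  have h1 : ((2:ℝ) ^ (-n)) = (((2:ℝ≥0) ^ (-n) : ℝ≥0) : ℝ) := by
    push_cast; ring
  rw [h1, ← NNReal.coe_rpow, Real.toNNReal_coe]

variable (β : ℝ) (K : Set (Euc d))

def Fd : ℕ → ℤ → (Fin d → ℤ) → ℝ≥0
  | 0, n, k => if (K ∩ cube n k).Nonempty then capn β n else 0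
  | (m+1), n, k => min (capn β n) (∑ c : Fin d → Bool, Fd m (n+1) (childIdx c k))

lemma Fd_zero_eq_zero {n : ℤ} {k : Fin d → ℤ} (h : K ∩ cube n k = ∅) :
    ∀ m, Fd β K m n k = 0 := by
  intro m
  induction m generalizing n k with
  | zero => simp [Fd, h]
  | succ m ih =>
      have hch : ∀ c : Fin d → Bool, K ∩ cube (n+1) (childIdx c k) = ∅ := by
        intro c
        have : cube (n+1) (childIdx c k) ⊆ cube (d := d) n k := by
          rw [cube_eq_iUnion_children (n := n) (k := k)]
          exact subset_iUnion (fun c => cube (n+1) (childIdx c k)) c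
        rw [← subset_empty_iff, ← h]
        exact inter_subset_inter_right _ this
      simp only [Fd]
      have : ∀ c : Fin d → Bool, Fd β K m (n+1) (childIdx c k) = 0 := fun c => ih (hch c)
      simp [this]

lemma Fd_succ_le (m : ℕ) : ∀ (n : ℤ) (k : Fin d → ℤ), Fd β K (m+1) n k ≤ Fd β K m n k := by
  induction m with
  | zero =>
      intro n k
      by_cases h : (K ∩ cube n k).Nonempty
      · simp only [Fd, h, if_true]
        exact min_le_left _ _
      · rw [not_nonempty_iff_eq_empty] at h
        rw [Fd_zero_eq_zero β K h 1]
        exact zero_le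
  | succ m ih =>
      intro n k
      simp only [Fd]
      exact min_le_min le_rfl (Finset.sum_le_sum fun c _ => ih _ _)

lemma Fd_antitone {n : ℤ} {k : Fin d → ℤ} : Antitone (fun m => Fd β K m n k) := by
  refine antitone_nat_of_succ_le fun m => Fd_succ_le β K m n k

def Fl (n : ℤ) (k : Fin d → ℤ) : ℝ≥0 := ⨅ m, Fd β K m n k

lemma Fl_le (m : ℕ) (n : ℤ) (k : Fin d → ℤ) : Fl β K n k ≤ Fd β K m n k :=
  ciInf_le (OrderBot.bddBelow _) m

lemma Fl_tendsto (n : ℤ) (k : Fin d → ℤ) :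
    Tendsto (fun m => Fd β K m n k) atTop (𝓝 (Fl β K n k)) :=
  tendsto_atTop_ciInf (Fd_antitone β K) (OrderBot.bddBelow _)

lemma Fl_rec (n : ℤ) (k : Fin d → ℤ) :
    Fl β K n k = min (capn β n) (∑ c : Fin d → Bool, Fl β K (n+1) (childIdx c k)) := by
  have h1 : Tendsto (fun m => Fd β K (m+1) n k) atTop (𝓝 (Fl β K n k)) :=
    (Fl_tendsto β K n k).comp (tendsto_add_atTop_nat 1)
  have h2 : Tendsto (fun m => Fd β K (m+1) n k) atTop
      (𝓝 (min (capn β n) (∑ c : Fin d → Bool, Fl β K (n+1) (childIdx c k)))) := by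
    have : (fun m => Fd β K (m+1) n k)
        = fun m => min (capn β n) (∑ c : Fin d → Bool, Fd β K m (n+1) (childIdx c k)) := by
      funext m; simp [Fd]
    rw [this]
    exact Tendsto.min tendsto_const_nhds
      (tendsto_finset_sum _ fun c _ => Fl_tendsto β K (n+1) (childIdx c k))
  exact tendsto_nhds_unique h1 h2

lemma Fl_le_capn (n : ℤ) (k : Fin d → ℤ) : Fl β K n k ≤ capn β n := by
  rw [Fl_rec]; exact min_le_left _ _

lemma Fl_le_sum_children (n : ℤ) (k : Fin d → ℤ) :
    Fl β K n k ≤ ∑ c : Fin d → Bool, Fl β K (n+1) (childIdx c k) := by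
  conv_lhs => rw [Fl_rec]
  exact min_le_right _ _

lemma cube_inter_nonempty_of_Fl_pos {n : ℤ} {k : Fin d → ℤ} (h : Fl β K n k ≠ 0) :
    (K ∩ cube n k).Nonempty := by
  by_contra hne
  rw [not_nonempty_iff_eq_empty] at hne
  exact h (le_antisymm (by simpa [Fd_zero_eq_zero β K hne 0] using Fl_le β K 0 n k) zero_le)

lemma content_le_Fd (hβ : 0 < β) (m : ℕ) : ∀ (n : ℤ) (k : Fin d → ℤ),
    hausdorffContent d β (K ∩ cube n k)
      ≤ ENNReal.ofReal ((Real.sqrt d + 1) ^ β) * (Fd β K m n k : ℝ≥0∞) := by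
  have hσ : (0:ℝ) ≤ Real.sqrt d + 1 := by positivity
  have hball : ∀ (n : ℤ) (k : Fin d → ℤ), hausdorffContent d β (K ∩ cube n k)
      ≤ ENNReal.ofReal ((Real.sqrt d + 1) ^ β) * (capn β n : ℝ≥0∞) := by
    intro n k
    have h1 : K ∩ cube n k ⊆ ball (center n k) ((Real.sqrt d + 1) * 2 ^ (-n)) :=
      (inter_subset_right).trans (cube_subset_cubeCl.trans cube_subset_ball)
    refine (content_le_of_subset_ball hβ h1).trans ?_
    rw [coe_capn, ← ENNReal.ofReal_mul (by positivity)]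
    rw [Real.mul_rpow hσ (by positivity)]
  induction m with
  | zero =>
      intro n k
      by_cases h : (K ∩ cube n k).Nonempty
      · simpa [Fd, h] using hball n k
      · rw [not_nonempty_iff_eq_empty] at h
        simp [h, content_empty hβ]
  | succ m ih =>
      intro n k
      have hsplit : K ∩ cube n k = ⋃ c ∈ (Finset.univ : Finset (Fin d → Bool)),
          K ∩ cube (n+1) (childIdx c k) := by
        rw [cube_eq_iUnion_children (n := n) (k := k)]
        simp [inter_iUnion]
      have h2 : hausdorffContent d β (K ∩ cube n k)
          ≤ ENNReal.ofReal ((Real.sqrt d + 1) ^ β)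
            * ((∑ c : Fin d → Bool, Fd β K m (n+1) (childIdx c k) : ℝ≥0) : ℝ≥0∞) := by
        rw [hsplit]
        refine (content_finset_le hβ _ _).trans ?_
        push_cast
        rw [Finset.mul_sum]
        exact Finset.sum_le_sum fun c _ => ih _ _
      simp only [Fd]
      rcases min_cases (capn β n) (∑ c : Fin d → Bool, Fd β K m (n+1) (childIdx c k)) with
        ⟨hmin, _⟩ | ⟨hmin, _⟩
      · rw [hmin]; exact hball n k
      · rw [hmin]; exact h2

lemma content_le_Fl (hβ : 0 < β) (n : ℤ) (k : Fin d → ℤ) :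
    hausdorffContent d β (K ∩ cube n k)
      ≤ ENNReal.ofReal ((Real.sqrt d + 1) ^ β) * (Fl β K n k : ℝ≥0∞) := by
  have hσpos : (0:ℝ) < (Real.sqrt d + 1) ^ β := by positivity
  set γ := ENNReal.ofReal ((Real.sqrt d + 1) ^ β) with hγ
  have hγ0 : γ ≠ 0 := by simp [hγ, hσpos]
  have hγtop : γ ≠ ∞ := ENNReal.ofReal_ne_top
  rw [mul_comm, ← ENNReal.div_le_iff_le_mul (Or.inl hγ0) (Or.inl hγtop)]
  unfold Fl
  rw [ENNReal.coe_iInf]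
  refine le_iInf fun m => ?_
  rw [ENNReal.div_le_iff_le_mul (Or.inl hγ0) (Or.inl hγtop)]
  rw [mul_comm]
  exact content_le_Fd β K hβ m n k


/-! ### Tiling of an interval by subintervals indexed by an enumerated fintype -/

def rk : (Fin d → Bool) → ℕ := fun c => (Fintype.equivFin (Fin d → Bool) c : ℕ)

lemma rk_inj : Function.Injective (rk (d := d)) := fun a b h =>
  (Fintype.equivFin _).injective (Fin.ext h)

def off (ℓ : (Fin d → Bool) → ℝ≥0) (c : Fin d → Bool) : ℝ≥0 :=
  ∑ c' ∈ Finset.univ.filter (fun c' => rk c' < rk c), ℓ c'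

lemma off_add_le {ℓ : (Fin d → Bool) → ℝ≥0} {c c' : Fin d → Bool} (h : rk c < rk c') :
    off ℓ c + ℓ c ≤ off ℓ c' := by
  have hnotmem : c ∉ Finset.univ.filter (fun c' => rk c' < rk c) := by
    simp
  have : off ℓ c + ℓ c = ∑ j ∈ insert c (Finset.univ.filter (fun c' => rk c' < rk c)), ℓ j := by
    rw [Finset.sum_insert hnotmem, add_comm]; rfl
  rw [this]
  refine Finset.sum_le_sum_of_subset ?_
  intro j hj
  rcases Finset.mem_insert.1 hj with rfl | hj
  · simpa using h
  · simp only [Finset.mem_filter, Finset.mem_univ, true_and] at hj ⊢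
    omega

lemma off_add_le_total (ℓ : (Fin d → Bool) → ℝ≥0) (c : Fin d → Bool) :
    off ℓ c + ℓ c ≤ ∑ c', ℓ c' := by
  have hnotmem : c ∉ Finset.univ.filter (fun c' => rk c' < rk c) := by simp
  have : off ℓ c + ℓ c = ∑ j ∈ insert c (Finset.univ.filter (fun c' => rk c' < rk c)), ℓ j := by
    rw [Finset.sum_insert hnotmem, add_comm]; rfl
  rw [this]
  exact Finset.sum_le_sum_of_subset (Finset.subset_univ _)

lemma exists_off_mem (ℓ : (Fin d → Bool) → ℝ≥0) {a t : ℝ}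
    (ht : a ≤ t) (ht2 : t < a + ((∑ c', ℓ c' : ℝ≥0) : ℝ)) :
    ∃ c, a + (off ℓ c : ℝ) ≤ t ∧ t < a + (off ℓ c : ℝ) + (ℓ c : ℝ) := by
  set N := Fintype.card (Fin d → Bool) with hN
  have hNpos : 0 < N := Fintype.card_pos
  have rk_lt : ∀ c : Fin d → Bool, rk c < N := fun c => (Fintype.equivFin _ c).isLt
  have rk_surj : ∀ m, m < N → ∃ c : Fin d → Bool, rk c = m := fun m hm =>
    ⟨(Fintype.equivFin _).symm ⟨m, hm⟩, by simp [rk]⟩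
  set T : Finset (Fin d → Bool) := Finset.univ.filter (fun c => a + (off ℓ c : ℝ) ≤ t) with hT
  have hTne : T.Nonempty := by
    obtain ⟨c₀, hc₀⟩ := rk_surj 0 hNpos
    refine ⟨c₀, ?_⟩
    have : off ℓ c₀ = 0 := by
      unfold off
      rw [Finset.sum_eq_zero]
      intro j hj
      simp only [Finset.mem_filter, hc₀] at hj
      omega
    simp [hT, this, ht]
  obtain ⟨c, hcT, hmax⟩ := T.exists_max_image rk hTne
  simp only [hT, Finset.mem_filter, Finset.mem_univ, true_and] at hcT
  refine ⟨c, hcT, ?_⟩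
  by_contra hcon
  push_neg at hcon
  by_cases hlast : rk c + 1 < N
  · obtain ⟨c', hc'⟩ := rk_surj (rk c + 1) hlast
    have hoff : off ℓ c' = off ℓ c + ℓ c := by
      unfold off
      rw [hc']
      have hset : Finset.univ.filter (fun c'' => rk c'' < rk c + 1)
          = insert c (Finset.univ.filter (fun c'' => rk c'' < rk c)) := by
        ext j
        simp only [Finset.mem_filter, Finset.mem_univ, true_and, Finset.mem_insert]
        constructor
        · intro hj
          rcases Nat.lt_succ_iff_lt_or_eq.1 hj with h | h
          · exact Or.inr h
          · exact Or.inl (rk_inj h)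
        · rintro (rfl | hj) <;> omega
      rw [hset, Finset.sum_insert (by simp), add_comm]
    have hc'T : c' ∈ T := by
      simp only [hT, Finset.mem_filter, Finset.mem_univ, true_and]
      rw [hoff]
      push_cast
      linarith
    have := hmax c' hc'T
    omega
  · -- c is the last index
    have hall : (Finset.univ : Finset (Fin d → Bool)) =
        insert c (Finset.univ.filter (fun c'' => rk c'' < rk c)) := by
      ext j
      simp only [Finset.mem_univ, Finset.mem_insert, Finset.mem_filter, true_and, true_iff]
      by_cases hj : j = c
      · exact Or.inl hj
      · refine Or.inr ?_
        have h1 := rk_lt j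
        have h2 : rk j ≠ rk c := fun h => hj (rk_inj h)
        omega
    have : (∑ c', ℓ c') = off ℓ c + ℓ c := by
      rw [hall, Finset.sum_insert (by simp), add_comm]
      rfl
    rw [this] at ht2
    push_cast at ht2
    linarith

/-! ### The word data structure -/

structure St (d : ℕ) where
  gen : ℤ
  idx : Fin d → ℤ
  pos : ℝ
  len : ℝ≥0

variable (β : ℝ) (K : Set (Euc d)) (g₀ : ℤ) (k₀ : Fin d → ℤ)

def clen (n : ℤ) (k : Fin d → ℤ) (L : ℝ≥0) (c : Fin d → Bool) : ℝ≥0 :=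
  L * (Fl β K (n+1) (childIdx c k) / ∑ c' : Fin d → Bool, Fl β K (n+1) (childIdx c' k))

lemma clen_le_Fl {n : ℤ} {k : Fin d → ℤ} {L : ℝ≥0} (hL : L ≤ Fl β K n k) (c : Fin d → Bool) :
    clen β K n k L c ≤ Fl β K (n+1) (childIdx c k) := by
  unfold clen
  set S := ∑ c' : Fin d → Bool, Fl β K (n+1) (childIdx c' k) with hS
  rcases eq_or_ne S 0 with h0 | h0
  · simp [h0]
  · have hLS : L ≤ S := hL.trans (Fl_le_sum_children β K n k)
    rw [mul_div_assoc'] -- L * x / S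
    rw [div_le_iff₀ (pos_iff_ne_zero.2 h0)]
    calc L * Fl β K (n+1) (childIdx c k) ≤ S * Fl β K (n+1) (childIdx c k) :=
          mul_le_mul_left hLS _
      _ = Fl β K (n+1) (childIdx c k) * S := mul_comm _ _

lemma sum_clen_le (n : ℤ) (k : Fin d → ℤ) (L : ℝ≥0) :
    ∑ c, clen β K n k L c ≤ L := by
  unfold clen
  rw [← Finset.mul_sum]
  set S := ∑ c' : Fin d → Bool, Fl β K (n+1) (childIdx c' k) with hS
  have : ∑ c : Fin d → Bool, Fl β K (n+1) (childIdx c k) / S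
      = (∑ c : Fin d → Bool, Fl β K (n+1) (childIdx c k)) / S := by
    rw [Finset.sum_div]
  rw [this, ← hS]
  rcases eq_or_ne S 0 with h0 | h0
  · simp [h0]
  · rw [div_self h0, mul_one]

lemma sum_clen_eq {n : ℤ} {k : Fin d → ℤ} {L : ℝ≥0} (hL : L ≤ Fl β K n k) (h0 : L ≠ 0) :
    ∑ c, clen β K n k L c = L := by
  unfold clen
  rw [← Finset.mul_sum]
  set S := ∑ c' : Fin d → Bool, Fl β K (n+1) (childIdx c' k) with hS
  have hSne : S ≠ 0 := by
    intro hcon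
    have : Fl β K n k ≤ 0 := by
      have := Fl_le_sum_children β K n k
      rw [← hS, hcon] at this
      exact this
    exact h0 (le_antisymm (hL.trans this) zero_le)
  have : ∑ c : Fin d → Bool, Fl β K (n+1) (childIdx c k) / S = S / S := by
    rw [Finset.sum_div]
  rw [this, div_self hSne, mul_one]

def stepSt (s : St d) (c : Fin d → Bool) : St d :=
  ⟨s.gen + 1, childIdx c s.idx,
   s.pos + (off (fun c' => clen β K s.gen s.idx s.len c') c : ℝ),
   clen β K s.gen s.idx s.len c⟩

def dataSt : (m : ℕ) → (Fin m → (Fin d → Bool)) → St d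
  | 0, _ => ⟨g₀, k₀, 0, Fl β K g₀ k₀⟩
  | (m+1), w => stepSt β K (dataSt m (Fin.init w)) (w (Fin.last m))

def Ew (m : ℕ) (w : Fin m → (Fin d → Bool)) : Set ℝ :=
  Ico (dataSt β K g₀ k₀ m w).pos
    ((dataSt β K g₀ k₀ m w).pos + ((dataSt β K g₀ k₀ m w).len : ℝ))

lemma dataSt_snoc (m : ℕ) (u : Fin m → (Fin d → Bool)) (c : Fin d → Bool) :
    dataSt β K g₀ k₀ (m+1) (Fin.snoc u c) = stepSt β K (dataSt β K g₀ k₀ m u) c := by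
  set w : Fin (m+1) → (Fin d → Bool) := Fin.snoc u c with hw
  have h : dataSt β K g₀ k₀ (m+1) w
      = stepSt β K (dataSt β K g₀ k₀ m (Fin.init w)) (w (Fin.last m)) := rfl
  rw [h, hw, Fin.init_snoc, Fin.snoc_last]

lemma gen_dataSt (m : ℕ) (w : Fin m → (Fin d → Bool)) :
    (dataSt β K g₀ k₀ m w).gen = g₀ + m := by
  induction m with
  | zero => simp [dataSt]
  | succ m ih =>
      show (stepSt β K (dataSt β K g₀ k₀ m (Fin.init w)) _).gen = _
      unfold stepSt
      simp only []
      rw [ih]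
      push_cast
      ring

lemma len_le_Fl (m : ℕ) (w : Fin m → (Fin d → Bool)) :
    (dataSt β K g₀ k₀ m w).len
      ≤ Fl β K (dataSt β K g₀ k₀ m w).gen (dataSt β K g₀ k₀ m w).idx := by
  induction m with
  | zero => exact le_rfl
  | succ m ih =>
      show (stepSt β K (dataSt β K g₀ k₀ m (Fin.init w)) (w (Fin.last m))).len ≤ _
      unfold stepSt
      exact clen_le_Fl β K (ih (Fin.init w)) _

lemma Ew_step_subset (m : ℕ) (w : Fin (m+1) → (Fin d → Bool)) :
    Ew β K g₀ k₀ (m+1) w ⊆ Ew β K g₀ k₀ m (Fin.init w) := by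
  set s := dataSt β K g₀ k₀ m (Fin.init w) with hs
  set c := w (Fin.last m) with hc
  have hdata : dataSt β K g₀ k₀ (m+1) w = stepSt β K s c := rfl
  unfold Ew
  rw [hdata]
  unfold stepSt
  simp only []
  intro t ht
  simp only [mem_Ico] at ht ⊢
  have hoff := off_add_le_total (fun c' => clen β K s.gen s.idx s.len c') c
  have hsum := sum_clen_le β K s.gen s.idx s.len
  have h1 : (off (fun c' => clen β K s.gen s.idx s.len c') c : ℝ)
      + (clen β K s.gen s.idx s.len c : ℝ) ≤ (s.len : ℝ) := by
    have := hoff.trans hsum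
    exact_mod_cast this
  constructor
  · have : (0:ℝ) ≤ (off (fun c' => clen β K s.gen s.idx s.len c') c : ℝ) := by positivity
    linarith [ht.1]
  · linarith [ht.2]

lemma Ew_unique_aux (m : ℕ) : ∀ (w w' : Fin m → (Fin d → Bool)), w ≠ w' →
    Disjoint (Ew β K g₀ k₀ m w) (Ew β K g₀ k₀ m w') := by
  induction m with
  | zero => intro w w' hne; exact absurd (Subsingleton.elim w w') hne
  | succ m ih =>
      intro w w' hne
      by_cases hinit : Fin.init w = Fin.init w'
      · -- same parent, different last letters
        have hlast : w (Fin.last m) ≠ w' (Fin.last m) := by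
          intro hcon
          apply hne
          rw [← Fin.snoc_init_self w, ← Fin.snoc_init_self w', hinit, hcon]
        set s := dataSt β K g₀ k₀ m (Fin.init w) with hs
        set c := w (Fin.last m)
        set c' := w' (Fin.last m)
        have hd1 : dataSt β K g₀ k₀ (m+1) w = stepSt β K s c := rfl
        have hd2 : dataSt β K g₀ k₀ (m+1) w' = stepSt β K s c' := by
          show stepSt β K (dataSt β K g₀ k₀ m (Fin.init w')) _ = _
          rw [← hinit]
        have hrkne : rk c ≠ rk c' := fun h => hlast (rk_inj h)
        have key : ∀ c₁ c₂ : Fin d → Bool, rk c₁ < rk c₂ →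
            Disjoint (Ew β K g₀ k₀ (m+1) (Fin.snoc (Fin.init w) c₁))
              (Ew β K g₀ k₀ (m+1) (Fin.snoc (Fin.init w) c₂)) := by
          intro c₁ c₂ h12
          unfold Ew
          rw [dataSt_snoc, dataSt_snoc, ← hs]
          unfold stepSt
          simp only []
          refine Set.disjoint_left.2 fun t ht ht' => ?_
          simp only [mem_Ico] at ht ht'
          have hoo := off_add_le (ℓ := fun c'' => clen β K s.gen s.idx s.len c'') h12
          have : (off (fun c'' => clen β K s.gen s.idx s.len c'') c₁ : ℝ)
              + (clen β K s.gen s.idx s.len c₁ : ℝ)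
              ≤ (off (fun c'' => clen β K s.gen s.idx s.len c'') c₂ : ℝ) := by
            exact_mod_cast hoo
          linarith [ht.2, ht'.1]
        have hw : w = Fin.snoc (Fin.init w) c := (Fin.snoc_init_self w).symm
        have hw' : w' = Fin.snoc (Fin.init w) c' := by
          rw [hinit]; exact (Fin.snoc_init_self w').symm
        rcases lt_or_gt_of_ne hrkne with h | h
        · rw [hw, hw']; exact key c c' h
        · rw [hw, hw']; exact (key c' c h).symm
      · exact Set.disjoint_of_subset (Ew_step_subset β K g₀ k₀ m w)
          (Ew_step_subset β K g₀ k₀ m w') (ih _ _ hinit)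

lemma Ew_cover (m : ℕ) :
    ⋃ w : Fin m → (Fin d → Bool), Ew β K g₀ k₀ m w
      = Ico 0 ((Fl β K g₀ k₀ : ℝ≥0) : ℝ) := by
  induction m with
  | zero =>
      ext t
      simp only [mem_iUnion]
      constructor
      · rintro ⟨w, hw⟩
        unfold Ew dataSt at hw
        simpa using hw
      · intro ht
        refine ⟨fun i => i.elim0, ?_⟩
        unfold Ew dataSt
        simpa using ht
  | succ m ih =>
      apply Subset.antisymm
      · refine iUnion_subset fun w => (Ew_step_subset β K g₀ k₀ m w).trans ?_
        rw [← ih]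
        exact subset_iUnion _ (Fin.init w)
      · rw [← ih]
        refine iUnion_subset fun u => ?_
        intro t ht
        unfold Ew at ht
        set s := dataSt β K g₀ k₀ m u with hs
        simp only [mem_Ico] at ht
        have hlen0 : s.len ≠ 0 := by
          intro hcon
          rw [hcon] at ht
          simp at ht
          linarith [ht.1, ht.2]
        have hsum : ∑ c, clen β K s.gen s.idx s.len c = s.len :=
          sum_clen_eq β K (len_le_Fl β K g₀ k₀ m u) hlen0
        obtain ⟨c, hc1, hc2⟩ := exists_off_mem (fun c' => clen β K s.gen s.idx s.len c')
          (a := s.pos) ht.1 (by rw [hsum]; exact ht.2)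
        refine mem_iUnion.2 ⟨Fin.snoc u c, ?_⟩
        unfold Ew
        rw [dataSt_snoc, ← hs]
        unfold stepSt
        simp only [mem_Ico]
        constructor
        · exact hc1
        · exact hc2

lemma Ew_subset_base (m : ℕ) (w : Fin m → (Fin d → Bool)) :
    Ew β K g₀ k₀ m w ⊆ Ico 0 ((Fl β K g₀ k₀ : ℝ≥0) : ℝ) := by
  rw [← Ew_cover β K g₀ k₀ m]
  exact subset_iUnion _ w

lemma Ew_unique {m : ℕ} {w w' : Fin m → (Fin d → Bool)} {t : ℝ}
    (h : t ∈ Ew β K g₀ k₀ m w) (h' : t ∈ Ew β K g₀ k₀ m w') : w = w' := by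
  by_contra hne
  exact (Ew_unique_aux β K g₀ k₀ m w w' hne).ne_of_mem h h' rfl

lemma Ew_trunc {m m' : ℕ} (h : m ≤ m') (w : Fin m' → (Fin d → Bool)) :
    Ew β K g₀ k₀ m' w ⊆ Ew β K g₀ k₀ m (w ∘ Fin.castLE h) := by
  induction m' with
  | zero =>
      have : m = 0 := Nat.le_zero.1 h
      subst this
      have : w ∘ Fin.castLE h = w := by funext i; exact i.elim0
      rw [this]
  | succ m' ih =>
      rcases Nat.lt_or_ge m (m'+1) with hlt | hge
      · have hle : m ≤ m' := Nat.lt_succ_iff.1 hlt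
        refine (Ew_step_subset β K g₀ k₀ m' w).trans ?_
        refine (ih hle (Fin.init w)).trans ?_
        have : (Fin.init w) ∘ Fin.castLE hle = w ∘ Fin.castLE h := by
          funext i
          show w (Fin.castSucc (Fin.castLE hle i)) = w (Fin.castLE h i)
          exact congrArg w (Fin.ext rfl)
        rw [this]
      · have : m = m' + 1 := le_antisymm h hge
        subst this
        have : w ∘ Fin.castLE h = w := by
          funext i; exact congrArg w (Fin.ext rfl)
        rw [this]

lemma cube_dataSt_trunc {m m' : ℕ} (h : m ≤ m') (w : Fin m' → (Fin d → Bool)) :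
    cube (dataSt β K g₀ k₀ m' w).gen (dataSt β K g₀ k₀ m' w).idx
      ⊆ cube (dataSt β K g₀ k₀ m (w ∘ Fin.castLE h)).gen
        (dataSt β K g₀ k₀ m (w ∘ Fin.castLE h)).idx := by
  induction m' with
  | zero =>
      have : m = 0 := Nat.le_zero.1 h
      subst this
      have : w ∘ Fin.castLE h = w := by funext i; exact i.elim0
      rw [this]
  | succ m' ih =>
      rcases Nat.lt_or_ge m (m'+1) with hlt | hge
      · have hle : m ≤ m' := Nat.lt_succ_iff.1 hlt
        have hsub : cube (dataSt β K g₀ k₀ (m'+1) w).gen (dataSt β K g₀ k₀ (m'+1) w).idx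
            ⊆ cube (dataSt β K g₀ k₀ m' (Fin.init w)).gen
              (dataSt β K g₀ k₀ m' (Fin.init w)).idx := by
          set s := dataSt β K g₀ k₀ m' (Fin.init w)
          have : dataSt β K g₀ k₀ (m'+1) w = stepSt β K s (w (Fin.last m')) := rfl
          rw [this]
          exact child_subset
        refine hsub.trans ?_
        refine (ih hle (Fin.init w)).trans ?_
        have : (Fin.init w) ∘ Fin.castLE hle = w ∘ Fin.castLE h := by
          funext i
          show w (Fin.castSucc (Fin.castLE hle i)) = w (Fin.castLE h i)
          exact congrArg w (Fin.ext rfl)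
        rw [this]
      · have : m = m' + 1 := le_antisymm h hge
        subst this
        have : w ∘ Fin.castLE h = w := by
          funext i; exact congrArg w (Fin.ext rfl)
        rw [this]

lemma dataSt_idx_inj (m : ℕ) : ∀ (w w' : Fin m → (Fin d → Bool)),
    (dataSt β K g₀ k₀ m w).idx = (dataSt β K g₀ k₀ m w').idx → w = w' := by
  induction m with
  | zero => intro w w' _; exact Subsingleton.elim w w'
  | succ m ih =>
      intro w w' h
      have h1 : (dataSt β K g₀ k₀ (m+1) w).idx
          = childIdx (w (Fin.last m)) (dataSt β K g₀ k₀ m (Fin.init w)).idx := rfl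
      have h2 : (dataSt β K g₀ k₀ (m+1) w').idx
          = childIdx (w' (Fin.last m)) (dataSt β K g₀ k₀ m (Fin.init w')).idx := rfl
      rw [h1, h2] at h
      obtain ⟨hc, hk⟩ := childIdx_inj h
      have hinit := ih _ _ hk
      rw [← Fin.snoc_init_self w, ← Fin.snoc_init_self w', hinit, hc]


lemma dataSt_zero :
    dataSt β K g₀ k₀ 0 (fun i : Fin 0 => i.elim0 : Fin 0 → (Fin d → Bool))
      = ⟨g₀, k₀, 0, Fl β K g₀ k₀⟩ := rfl

lemma dataSt_step (m : ℕ) (w : Fin (m+1) → (Fin d → Bool)) :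
    (dataSt β K g₀ k₀ (m+1) w).gen = (dataSt β K g₀ k₀ m (Fin.init w)).gen + 1 ∧
    (dataSt β K g₀ k₀ (m+1) w).idx
      = childIdx (w (Fin.last m)) (dataSt β K g₀ k₀ m (Fin.init w)).idx := ⟨rfl, rfl⟩


/-! ### The coding map and its limit -/

def cW (m : ℕ) (w : Fin m → (Fin d → Bool)) : Euc d :=
  center (dataSt β K g₀ k₀ m w).gen (dataSt β K g₀ k₀ m w).idx

def hcm (m : ℕ) : ℝ → Euc d :=
  fun t => ∑ w : Fin m → (Fin d → Bool),
    (Ew β K g₀ k₀ m w).indicator (fun _ => cW β K g₀ k₀ m w) t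

lemma measurable_hcm (m : ℕ) : Measurable (hcm β K g₀ k₀ m) := by
  refine Finset.measurable_sum _ fun w _ => ?_
  exact Measurable.indicator measurable_const measurableSet_Ico

lemma hcm_eq {m : ℕ} {w : Fin m → (Fin d → Bool)} {t : ℝ} (h : t ∈ Ew β K g₀ k₀ m w) :
    hcm β K g₀ k₀ m t = cW β K g₀ k₀ m w := by
  unfold hcm
  rw [Finset.sum_eq_single w]
  · exact indicator_of_mem h _
  · intro w' _ hne
    refine indicator_of_notMem (fun hmem => ?_) _
    exact hne (Ew_unique β K g₀ k₀ hmem h)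
  · intro habs
    exact absurd (Finset.mem_univ w) habs

lemma hcm_zero {m : ℕ} {t : ℝ} (h : t ∉ Ico 0 ((Fl β K g₀ k₀ : ℝ≥0) : ℝ)) :
    hcm β K g₀ k₀ m t = 0 := by
  unfold hcm
  refine Finset.sum_eq_zero fun w _ => ?_
  exact indicator_of_notMem (fun hmem => h (Ew_subset_base β K g₀ k₀ m w hmem)) _

lemma pow_aux (g₀ : ℤ) (m : ℕ) : (2:ℝ) ^ (-(g₀ + (m:ℤ))) = 2 ^ (-g₀) * (1/2) ^ m := by
  rw [neg_add, zpow_add₀ (two_ne_zero : (2:ℝ) ≠ 0)]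
  congr 1
  rw [one_div, inv_pow, ← zpow_natCast (2:ℝ) m, ← zpow_neg]

lemma exists_word {t : ℝ} (ht : t ∈ Ico 0 ((Fl β K g₀ k₀ : ℝ≥0) : ℝ)) (m : ℕ) :
    ∃ w, t ∈ Ew β K g₀ k₀ m w := by
  rw [← Ew_cover β K g₀ k₀ m] at ht
  exact mem_iUnion.1 ht

lemma dist_hcm_succ (t : ℝ) (m : ℕ) :
    dist (hcm β K g₀ k₀ m t) (hcm β K g₀ k₀ (m+1) t)
      ≤ (Real.sqrt d * 2 ^ (-g₀)) * (1/2) ^ m := by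
  have hpos : (0:ℝ) ≤ Real.sqrt d * 2 ^ (-g₀) * (1/2) ^ m := by positivity
  by_cases ht : t ∈ Ico 0 ((Fl β K g₀ k₀ : ℝ≥0) : ℝ)
  · obtain ⟨w, hw⟩ := exists_word β K g₀ k₀ ht (m+1)
    have hw' : t ∈ Ew β K g₀ k₀ m (Fin.init w) := Ew_step_subset β K g₀ k₀ m w hw
    rw [hcm_eq β K g₀ k₀ hw, hcm_eq β K g₀ k₀ hw']
    set s := dataSt β K g₀ k₀ m (Fin.init w) with hs
    have hcc : cubeCl s.gen s.idx ⊇ cube (d:=d) s.gen s.idx := cube_subset_cubeCl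
    have h1 : cW β K g₀ k₀ m (Fin.init w) ∈ cubeCl s.gen s.idx :=
      hcc center_mem
    have hstep := dataSt_step β K g₀ k₀ m w
    have h2 : cW β K g₀ k₀ (m+1) w ∈ cubeCl s.gen s.idx := by
      refine hcc ?_
      have hmem : center (dataSt β K g₀ k₀ (m+1) w).gen (dataSt β K g₀ k₀ (m+1) w).idx
          ∈ cube (dataSt β K g₀ k₀ (m+1) w).gen (dataSt β K g₀ k₀ (m+1) w).idx :=
        center_mem
      have heq : cube (dataSt β K g₀ k₀ (m+1) w).gen (dataSt β K g₀ k₀ (m+1) w).idx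
          = cube (s.gen + 1) (childIdx (w (Fin.last m)) s.idx) := by
        rw [hstep.1, hstep.2]
      rw [heq] at hmem
      exact child_subset hmem
    have hd := dist_le_of_mem_cubeCl h1 h2
    have hgen : s.gen = g₀ + m := gen_dataSt β K g₀ k₀ m (Fin.init w)
    rw [hgen] at hd
    calc dist (cW β K g₀ k₀ m (Fin.init w)) (cW β K g₀ k₀ (m+1) w)
        ≤ Real.sqrt d * 2 ^ (-(g₀ + (m:ℤ))) := hd
      _ = Real.sqrt d * 2 ^ (-g₀) * (1/2) ^ m := by rw [pow_aux]; ring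
  · rw [hcm_zero β K g₀ k₀ ht, hcm_zero β K g₀ k₀ ht]
    simpa using hpos

lemma cauchy_hcm (t : ℝ) : CauchySeq (fun m => hcm β K g₀ k₀ m t) :=
  cauchySeq_of_le_geometric (1/2) (Real.sqrt d * 2 ^ (-g₀)) (by norm_num)
    (fun m => dist_hcm_succ β K g₀ k₀ t m)

def limh (t : ℝ) : Euc d :=
  (cauchySeq_tendsto_of_complete (cauchy_hcm β K g₀ k₀ t)).choose

lemma limh_spec (t : ℝ) :
    Tendsto (fun m => hcm β K g₀ k₀ m t) atTop (𝓝 (limh β K g₀ k₀ t)) :=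
  (cauchySeq_tendsto_of_complete (cauchy_hcm β K g₀ k₀ t)).choose_spec

lemma measurable_limh : Measurable (limh β K g₀ k₀) := by
  refine measurable_of_tendsto_metrizable (measurable_hcm β K g₀ k₀) ?_
  rw [tendsto_pi_nhds]
  exact limh_spec β K g₀ k₀

lemma mem_cubeCl_limh {m : ℕ} {w : Fin m → (Fin d → Bool)} {t : ℝ}
    (hw : t ∈ Ew β K g₀ k₀ m w) :
    limh β K g₀ k₀ t ∈ cubeCl (dataSt β K g₀ k₀ m w).gen (dataSt β K g₀ k₀ m w).idx := by
  have ht : t ∈ Ico 0 ((Fl β K g₀ k₀ : ℝ≥0) : ℝ) := Ew_subset_base β K g₀ k₀ m w hw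
  refine isClosed_cubeCl.mem_of_tendsto (limh_spec β K g₀ k₀ t) ?_
  filter_upwards [eventually_ge_atTop m] with m' hm'
  obtain ⟨w', hw'⟩ := exists_word β K g₀ k₀ ht m'
  have htr : t ∈ Ew β K g₀ k₀ m (w' ∘ Fin.castLE hm') := Ew_trunc β K g₀ k₀ hm' w' hw'
  have hweq : w' ∘ Fin.castLE hm' = w := Ew_unique β K g₀ k₀ htr hw
  rw [hcm_eq β K g₀ k₀ hw']
  have h1 : cW β K g₀ k₀ m' w'
      ∈ cube (dataSt β K g₀ k₀ m' w').gen (dataSt β K g₀ k₀ m' w').idx := center_mem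
  have h2 := cube_dataSt_trunc β K g₀ k₀ hm' w' h1
  rw [hweq] at h2
  exact cube_subset_cubeCl h2

lemma mem_closure_limh {t : ℝ} (ht : t ∈ Ico 0 ((Fl β K g₀ k₀ : ℝ≥0) : ℝ)) :
    limh β K g₀ k₀ t ∈ closure (K ∩ cube g₀ k₀) := by
  rw [Metric.mem_closure_iff]
  intro ε hε
  set D : ℝ := (Real.sqrt d + 1) * 2 ^ (-g₀) with hD
  have hDpos : 0 < D := by positivity
  obtain ⟨m, hm⟩ := exists_pow_lt_of_lt_one (x := ε / D) (y := (1/2:ℝ)) (by positivity) (by norm_num)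
  obtain ⟨w, hw⟩ := exists_word β K g₀ k₀ ht m
  set s := dataSt β K g₀ k₀ m w with hs
  have hlenpos : s.len ≠ 0 := by
    intro hcon
    have := hw
    unfold Ew at this
    rw [← hs, hcon] at this
    simp at this
  have hFl : Fl β K s.gen s.idx ≠ 0 := by
    intro hcon
    exact hlenpos (le_antisymm (le_trans (len_le_Fl β K g₀ k₀ m w) (le_of_eq hcon)) zero_le)
  obtain ⟨q, hqK, hqcube⟩ := cube_inter_nonempty_of_Fl_pos β K hFl
  have hqtop : q ∈ cube g₀ k₀ := by
    have h0 : (0:ℕ) ≤ m := Nat.zero_le m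
    have := cube_dataSt_trunc β K g₀ k₀ h0 w hqcube
    have hz : dataSt β K g₀ k₀ 0 (w ∘ Fin.castLE h0) = ⟨g₀, k₀, 0, Fl β K g₀ k₀⟩ := by
      have : (w ∘ Fin.castLE h0) = (fun i : Fin 0 => i.elim0) := by
        funext i; exact i.elim0
      rw [this]
      exact dataSt_zero β K g₀ k₀
    rw [hz] at this
    exact this
  refine ⟨q, ⟨hqK, hqtop⟩, ?_⟩
  have h1 : limh β K g₀ k₀ t ∈ cubeCl s.gen s.idx := mem_cubeCl_limh β K g₀ k₀ hw
  have h2 : q ∈ cubeCl s.gen s.idx := cube_subset_cubeCl hqcube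
  have hd := dist_le_of_mem_cubeCl h1 h2
  have hgen : s.gen = g₀ + m := gen_dataSt β K g₀ k₀ m w
  rw [hgen] at hd
  calc dist (limh β K g₀ k₀ t) q ≤ Real.sqrt d * 2 ^ (-(g₀ + (m:ℤ))) := hd
    _ = Real.sqrt d * 2 ^ (-g₀) * (1/2) ^ m := by rw [pow_aux]; ring
    _ ≤ D * (1/2)^m := by
        have : Real.sqrt d * 2 ^ (-g₀:ℤ) ≤ D := by
          rw [hD]
          have h1 : (0:ℝ) ≤ 2 ^ (-g₀:ℤ) := by positivity
          nlinarith [Real.sqrt_nonneg (d:ℝ)]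
        have h2 : (0:ℝ) ≤ (1/2:ℝ)^m := by positivity
        nlinarith
    _ = (1/2)^m * D := mul_comm _ _
    _ < ε := by
        rw [lt_div_iff₀ hDpos] at hm
        exact hm

/-! ### The measure associated to a top cube -/

def νm : Measure (Euc d) :=
  Measure.map (limh β K g₀ k₀) (volume.restrict (Ico 0 ((Fl β K g₀ k₀ : ℝ≥0) : ℝ)))

lemma νm_apply {A : Set (Euc d)} (hA : MeasurableSet A) :
    νm β K g₀ k₀ A
      = volume (limh β K g₀ k₀ ⁻¹' A ∩ Ico 0 ((Fl β K g₀ k₀ : ℝ≥0) : ℝ)) := by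
  unfold νm
  rw [Measure.map_apply (measurable_limh β K g₀ k₀) hA,
    Measure.restrict_apply (measurable_limh β K g₀ k₀ hA)]

lemma νm_univ : νm β K g₀ k₀ univ = ((Fl β K g₀ k₀ : ℝ≥0) : ℝ≥0∞) := by
  rw [νm_apply β K g₀ k₀ MeasurableSet.univ, preimage_univ, univ_inter, Real.volume_Ico,
    sub_zero, ENNReal.ofReal_coe_nnreal]

lemma νm_null : νm β K g₀ k₀ ((closure (K ∩ cube g₀ k₀))ᶜ) = 0 := by
  rw [νm_apply β K g₀ k₀ (isClosed_closure.measurableSet.compl)]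
  have hempty : limh β K g₀ k₀ ⁻¹' ((closure (K ∩ cube g₀ k₀))ᶜ)
      ∩ Ico 0 ((Fl β K g₀ k₀ : ℝ≥0) : ℝ) = ∅ := by
    ext t
    simp only [mem_inter_iff, mem_preimage, mem_compl_iff, mem_empty_iff_false, iff_false,
      not_and]
    intro hc ht
    exact hc (mem_closure_limh β K g₀ k₀ ht)
  rw [hempty]
  exact measure_empty

lemma one_le_five_pow : (1:ℝ≥0∞) ≤ (5:ℝ≥0∞)^d := one_le_pow_of_one_le' (by norm_num) d

lemma νm_ball (hβ : 0 < β) (y : Euc d) (ρ : ℝ) (hρ : 0 < ρ) :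
    νm β K g₀ k₀ (ball y ρ) ≤ (5:ℝ≥0∞)^d * ENNReal.ofReal ((2*ρ)^β) := by
  rcases le_or_gt ((2:ℝ)^(-g₀)) ρ with hcase | hcase
  · have h1 : νm β K g₀ k₀ (ball y ρ) ≤ νm β K g₀ k₀ univ := measure_mono (subset_univ _)
    rw [νm_univ] at h1
    refine h1.trans ?_
    have h2 : ((Fl β K g₀ k₀ : ℝ≥0) : ℝ≥0∞) ≤ ((capn β g₀ : ℝ≥0) : ℝ≥0∞) :=
      ENNReal.coe_le_coe.2 (Fl_le_capn β K g₀ k₀)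
    refine h2.trans ?_
    rw [coe_capn]
    have h3 : ((2:ℝ)^(-g₀)) ^ β ≤ (2*ρ)^β :=
      Real.rpow_le_rpow (by positivity) (by linarith) hβ.le
    calc ENNReal.ofReal (((2:ℝ)^(-g₀))^β) ≤ ENNReal.ofReal ((2*ρ)^β) :=
          ENNReal.ofReal_le_ofReal h3
      _ ≤ (5:ℝ≥0∞)^d * ENNReal.ofReal ((2*ρ)^β) :=
          le_mul_of_one_le_left zero_le one_le_five_pow
  · obtain ⟨g, hg1, hg2⟩ := exists_int_scale hρ
    have hgge : g₀ ≤ g := by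
      have h1 : (2:ℝ)^(-g) < 2^(1 + -g₀) := by
        calc (2:ℝ)^(-g) ≤ 2*ρ := hg2
          _ < 2 * 2^(-g₀) := by linarith
          _ = 2^(1 + -g₀) := by rw [zpow_add₀ (two_ne_zero : (2:ℝ) ≠ 0)]; norm_num
      have := (zpow_lt_zpow_iff_right₀ (by norm_num : (1:ℝ) < 2)).1 h1
      omega
    set m := (g - g₀).toNat with hm
    have hgm : g₀ + (m:ℤ) = g := by rw [hm]; omega
    set WS : Finset (Fin m → Fin d → Bool) := Finset.univ.filter
      (fun w => (cubeCl (dataSt β K g₀ k₀ m w).gen (dataSt β K g₀ k₀ m w).idx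
        ∩ closedBall y ρ).Nonempty) with hWS
    have hsub : limh β K g₀ k₀ ⁻¹' (ball y ρ) ∩ Ico 0 ((Fl β K g₀ k₀ : ℝ≥0) : ℝ)
        ⊆ ⋃ w ∈ WS, Ew β K g₀ k₀ m w := by
      rintro t ⟨htb, hti⟩
      obtain ⟨w, hw⟩ := exists_word β K g₀ k₀ hti m
      have h1 := mem_cubeCl_limh β K g₀ k₀ hw
      exact mem_biUnion (Finset.mem_filter.2
        ⟨Finset.mem_univ _, ⟨limh β K g₀ k₀ t, h1, ball_subset_closedBall htb⟩⟩) hw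
    have hvol : ∀ w : Fin m → Fin d → Bool,
        volume (Ew β K g₀ k₀ m w) ≤ ((capn β (g₀ + (m:ℤ)) : ℝ≥0) : ℝ≥0∞) := by
      intro w
      unfold Ew
      rw [Real.volume_Ico, add_sub_cancel_left, ENNReal.ofReal_coe_nnreal]
      refine ENNReal.coe_le_coe.2 ?_
      refine (len_le_Fl β K g₀ k₀ m w).trans ?_
      rw [gen_dataSt β K g₀ k₀ m w]
      exact Fl_le_capn β K _ _
    have hcard : WS.card ≤ 5^d := by
      rw [← card_Icc_5 y g]
      refine Finset.card_le_card_of_injOn (fun w => (dataSt β K g₀ k₀ m w).idx) ?_ ?_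
      · intro w hw
        rw [hWS, Finset.mem_coe, Finset.mem_filter] at hw
        have hne := hw.2
        rw [gen_dataSt β K g₀ k₀ m w, hgm] at hne
        exact cube_index_mem_Icc hρ hg1 y hne
      · intro w hw w' hw' h
        exact dataSt_idx_inj β K g₀ k₀ m w w' h
    calc νm β K g₀ k₀ (ball y ρ)
        = volume (limh β K g₀ k₀ ⁻¹' (ball y ρ) ∩ Ico 0 ((Fl β K g₀ k₀ : ℝ≥0) : ℝ)) :=
          νm_apply β K g₀ k₀ measurableSet_ball
      _ ≤ volume (⋃ w ∈ WS, Ew β K g₀ k₀ m w) := measure_mono hsub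
      _ ≤ ∑ w ∈ WS, volume (Ew β K g₀ k₀ m w) := measure_biUnion_finset_le _ _
      _ ≤ ∑ _w ∈ WS, ((capn β (g₀ + (m:ℤ)) : ℝ≥0) : ℝ≥0∞) :=
          Finset.sum_le_sum fun w _ => hvol w
      _ = WS.card * ((capn β (g₀ + (m:ℤ)) : ℝ≥0) : ℝ≥0∞) := by
          rw [Finset.sum_const, nsmul_eq_mul]
      _ ≤ (5:ℝ≥0∞)^d * ENNReal.ofReal ((2*ρ)^β) := by
          refine mul_le_mul' ?_ ?_
          · calc (WS.card : ℝ≥0∞) ≤ ((5^d : ℕ) : ℝ≥0∞) := Nat.cast_le.2 hcard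
              _ = (5:ℝ≥0∞)^d := by push_cast; ring
          · rw [hgm, coe_capn]
            refine ENNReal.ofReal_le_ofReal ?_
            exact Real.rpow_le_rpow (by positivity) hg2 hβ.le


/-! ### The core Frostman-type measure for one top cube -/

lemma core (hβ : 0 < β) :
    ∃ ν : Measure (Euc d),
      ν ((closure (K ∩ cube g₀ k₀))ᶜ) = 0 ∧
      ν univ ≤ ENNReal.ofReal (((2:ℝ)^(-g₀))^β) ∧
      hausdorffContent d β (K ∩ cube g₀ k₀)
        ≤ ENNReal.ofReal ((Real.sqrt d + 1)^β) * ν univ ∧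
      (∀ y ρ, 0 < ρ → ν (ball y ρ) ≤ (5:ℝ≥0∞)^d * ENNReal.ofReal ((2*ρ)^β)) := by
  refine ⟨νm β K g₀ k₀, νm_null β K g₀ k₀, ?_, ?_, fun y ρ hρ => νm_ball β K g₀ k₀ hβ y ρ hρ⟩
  · rw [νm_univ, ← coe_capn]
    exact ENNReal.coe_le_coe.2 (Fl_le_capn β K g₀ k₀)
  · rw [νm_univ]
    exact content_le_Fl β K hβ g₀ k₀

end

section

variable {d : ℕ} (β : ℝ)

lemma scale_measure (hβ : 0 < β) (x : Euc d) {ρ : ℝ} (hρ0 : 0 < ρ) (S : Set (Euc d))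
    (hSb : S ⊆ closedBall x ρ) {v : ℝ}
    (hcont : ENNReal.ofReal v ≤ hausdorffContent d β S) :
    ∃ ν : Measure (Euc d),
      ν ((closure S)ᶜ) = 0 ∧
      ν univ ≤ ENNReal.ofReal ((2*ρ)^β) ∧
      ENNReal.ofReal v ≤ (5:ℝ≥0∞)^d * (ENNReal.ofReal ((Real.sqrt d + 1)^β) * ν univ) ∧
      ∀ y ρ', 0 < ρ' → ν (ball y ρ') ≤ (5:ℝ≥0∞)^d * ENNReal.ofReal ((2*ρ')^β) := by
  classical
  obtain ⟨g, hg1, hg2⟩ := exists_int_scale hρ0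
  set s : Finset (Fin d → ℤ) :=
    Finset.Icc (fun i => ⌊(2:ℝ)^g * x i⌋ - 2) (fun i => ⌊(2:ℝ)^g * x i⌋ + 2) with hs
  have hcover : S ⊆ ⋃ k ∈ s, (S ∩ cube g k) := by
    intro z hz
    have h1 : z ∈ cube g (cubeOf g z) := mem_cubeOf g z
    have h2 : cubeOf g z ∈ s := by
      rw [hs]
      exact cube_index_mem_Icc hρ0 hg1 x ⟨z, cube_subset_cubeCl h1, hSb hz⟩
    exact mem_biUnion h2 ⟨hz, h1⟩
  have hsum : ENNReal.ofReal v ≤ ∑ k ∈ s, hausdorffContent d β (S ∩ cube g k) :=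
    hcont.trans ((content_mono hcover).trans (content_finset_le hβ s _))
  have hsne : s.Nonempty := by
    rw [hs]
    refine Finset.nonempty_Icc.2 ?_
    intro i
    simp only []
    omega
  have hpig : ∃ k ∈ s, ENNReal.ofReal v ≤ (5:ℝ≥0∞)^d * hausdorffContent d β (S ∩ cube g k) := by
    obtain ⟨kidx, hkmem, hksup⟩ :=
      s.exists_mem_eq_sup' hsne (fun k => hausdorffContent d β (S ∩ cube g k))
    refine ⟨kidx, hkmem, ?_⟩
    refine hsum.trans ?_
    calc ∑ k ∈ s, hausdorffContent d β (S ∩ cube g k)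
        ≤ ∑ _k ∈ s, s.sup' hsne (fun k => hausdorffContent d β (S ∩ cube g k)) :=
          Finset.sum_le_sum fun k hk =>
            Finset.le_sup' (f := fun k => hausdorffContent d β (S ∩ cube g k)) hk
      _ = (s.card : ℝ≥0∞) * s.sup' hsne (fun k => hausdorffContent d β (S ∩ cube g k)) := by
          rw [Finset.sum_const, nsmul_eq_mul]
      _ = (5:ℝ≥0∞)^d * hausdorffContent d β (S ∩ cube g kidx) := by
          rw [← hksup, card_Icc_5 x g]
          congr 1
          push_cast
          ring
  obtain ⟨kidx, _, hkv⟩ := hpig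
  obtain ⟨ν, hnull, hmassU, hmassL, hball⟩ := core β S g kidx hβ
  refine ⟨ν, ?_, ?_, ?_, hball⟩
  · exact measure_mono_null (compl_subset_compl.2 (closure_mono inter_subset_left)) hnull
  · exact hmassU.trans (ENNReal.ofReal_le_ofReal
      (Real.rpow_le_rpow (by positivity) hg2 hβ.le))
  · exact hkv.trans (mul_le_mul' le_rfl hmassL)

lemma rpow_pow_aux {t : ℝ} (ht : 0 ≤ t) (β : ℝ) (n : ℕ) : (t^n)^β = (t^β)^n := by
  rw [← Real.rpow_natCast t n, ← Real.rpow_mul ht, mul_comm, Real.rpow_mul ht,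
    Real.rpow_natCast]

lemma tsum_geom_tail (r : ℝ≥0∞) (k₀ : ℕ) :
    ∑' k : ℕ, (if k₀ ≤ k then r^(k+1) else 0) ≤ r^(k₀+1) * (1 - r)⁻¹ := by
  induction k₀ with
  | zero =>
      have h1 : ∀ k : ℕ, (if 0 ≤ k then r^(k+1) else 0) = r * r^k := by
        intro k
        simp [pow_succ, mul_comm]
      rw [tsum_congr h1, ENNReal.tsum_mul_left, ENNReal.tsum_geometric]
      rw [pow_one]
  | succ k₀ ih =>
      rw [tsum_eq_zero_add' ENNReal.summable]
      have h0 : (if k₀+1 ≤ 0 then r^(0+1) else 0) = 0 := by simp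
      rw [h0, zero_add]
      have h1 : ∀ k : ℕ, (if k₀+1 ≤ k+1 then r^(k+1+1) else 0)
          = r * (if k₀ ≤ k then r^(k+1) else 0) := by
        intro k
        by_cases h : k₀ ≤ k
        · simp only [h, if_true, Nat.add_le_add_iff_right, pow_succ]
          ring
        · simp [h, Nat.add_le_add_iff_right]
      rw [tsum_congr h1, ENNReal.tsum_mul_left]
      calc r * ∑' k : ℕ, (if k₀ ≤ k then r^(k+1) else 0)
          ≤ r * (r^(k₀+1) * (1 - r)⁻¹) := mul_le_mul' le_rfl ih
        _ = r^(k₀+1+1) * (1 - r)⁻¹ := by ring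

end

end FrostmanAux

open FrostmanAux Filter in
/-- Lemma 2.1, Frostman-type: for an α-thick domain Ω with constant C,
there is c = c(α,d,C) > 0 such that every x ∈ ∂Ω carries a Borel measure μ_x with
μ_x(Ω) = 0, μ_x(B(y,r)) ≤ r^{d−α} for all y, r > 0, and μ_x(B(x,r)) ≥ c r^{d−α}
for r < 1. -/
theorem exists_frostman_measure
    (d : ℕ) (α : ℝ) (hα0 : 0 ≤ α) (hαd : α ≤ d) (C : ℝ) (hC : 0 < C) :
    ∃ c : ℝ, 0 < c ∧
      ∀ (Ω : Set (EuclideanSpace ℝ (Fin d))), IsOpen Ω → Bornology.IsBounded Ω →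
        IsAlphaThick d α C Ω →
        ∀ x ∈ frontier Ω,
          ∃ μ : Measure (EuclideanSpace ℝ (Fin d)),
            μ Ω = 0 ∧
            (∀ (y : EuclideanSpace ℝ (Fin d)) (r : ℝ), 0 < r →
              μ (ball y r) ≤ ENNReal.ofReal (r ^ ((d : ℝ) - α))) ∧
            (∀ r : ℝ, 0 < r → r < 1 →
              ENNReal.ofReal (c * r ^ ((d : ℝ) - α)) ≤ μ (ball x r)) := by
  classical
  set β : ℝ := (d : ℝ) - α with hβdef
  have hβ0 : 0 ≤ β := by rw [hβdef]; linarith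
  rcases eq_or_lt_of_le hβ0 with hβz | hβpos
  · -- degenerate case β = 0
    refine ⟨1, one_pos, ?_⟩
    intro Ω hΩ _ _ x hx
    have hxΩ : x ∉ Ω := by
      rw [hΩ.frontier_eq] at hx
      exact hx.2
    refine ⟨Measure.dirac x, ?_, ?_, ?_⟩
    · rw [Measure.dirac_apply' x hΩ.measurableSet]
      simp [hxΩ]
    · intro y r _
      rw [← hβz, Real.rpow_zero, ENNReal.ofReal_one]
      exact prob_le_one
    · intro r hr0 _
      rw [← hβz, Real.rpow_zero, mul_one, ENNReal.ofReal_one,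
        Measure.dirac_apply_of_mem (mem_ball_self hr0)]
  · -- main case 0 < β
    set θ : ℝ := min ((C/2) ^ β⁻¹) (1/2) with hθdef
    have hCpos2 : (0:ℝ) < C/2 := by linarith
    have hθ0 : 0 < θ := lt_min (Real.rpow_pos_of_pos hCpos2 _) (by norm_num)
    have hθβ : θ ^ β ≤ C/2 := by
      calc θ ^ β ≤ ((C/2) ^ β⁻¹) ^ β :=
            Real.rpow_le_rpow hθ0.le (min_le_left _ _) hβpos.le
        _ = C/2 := Real.rpow_inv_rpow hCpos2.le hβpos.ne'
    have hθhalf : θ ≤ 1/2 := min_le_right _ _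
    set t : ℝ := θ/4 with htdef
    have ht0 : 0 < t := by rw [htdef]; linarith
    have ht1 : t < 1 := by rw [htdef]; linarith
    have htβpos : 0 < t ^ β := Real.rpow_pos_of_pos ht0 _
    have htβ1 : t ^ β < 1 := Real.rpow_lt_one ht0.le ht1 hβpos
    have h1t : 0 < 1 - t ^ β := by linarith
    set γ : ℝ := (Real.sqrt d + 1) ^ β with hγdef
    have hγpos : 0 < γ := by
      rw [hγdef]
      have : (0:ℝ) < Real.sqrt d + 1 := by positivity
      positivity
    have h2βpos : (0:ℝ) < 2 ^ β := Real.rpow_pos_of_pos (by norm_num) _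
    set Λ : ℝ := (5:ℝ)^d * 2^β + 2^β * (1 - t^β)⁻¹ with hΛdef
    have hΛpos : 0 < Λ := by
      rw [hΛdef]
      positivity
    set cv : ℝ := Λ⁻¹ * ((C/2) * t^β / ((5:ℝ)^d * γ)) with hcvdef
    have hcv : 0 < cv := by rw [hcvdef]; positivity
    have h5e : (5:ℝ≥0∞)^d = ENNReal.ofReal ((5:ℝ)^d) := by
      rw [ENNReal.ofReal_pow (by norm_num : (0:ℝ) ≤ 5)]
      simp
    refine ⟨cv, hcv, ?_⟩
    intro Ω hΩ _ hthick x hx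
    have key : ∀ k : ℕ, ∃ ν : Measure (EuclideanSpace ℝ (Fin d)),
        ν Ω = 0 ∧
        ν ({z : EuclideanSpace ℝ (Fin d) |
            θ * t^(k+1) ≤ dist z x ∧ dist z x ≤ t^(k+1)}ᶜ) = 0 ∧
        ν univ ≤ ENNReal.ofReal ((2 * t^(k+1))^β) ∧
        ENNReal.ofReal ((C/2) * (t^(k+1))^β)
          ≤ (5:ℝ≥0∞)^d * (ENNReal.ofReal γ * ν univ) ∧
        (∀ y ρ', 0 < ρ' → ν (ball y ρ') ≤ (5:ℝ≥0∞)^d * ENNReal.ofReal ((2*ρ')^β)) := by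
      intro k
      set ρ : ℝ := t^(k+1) with hρdef
      have hρ0 : 0 < ρ := by rw [hρdef]; positivity
      have hρ1 : ρ < 1 := by
        rw [hρdef]
        calc t^(k+1) ≤ t^1 := pow_le_pow_of_le_one ht0.le ht1.le (by omega)
          _ = t := pow_one t
          _ < 1 := ht1
      set S : Set (EuclideanSpace ℝ (Fin d)) := (ball x ρ \ Ω) \ ball x (θ*ρ) with hSdef
      have h1 := hthick x hx ρ hρ0 hρ1
      rw [← hβdef] at h1
      have h2 : hausdorffContent d β (ball x ρ \ Ω)
          ≤ hausdorffContent d β S + ENNReal.ofReal ((θ*ρ)^β) := by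
        have hsub2 : ball x ρ \ Ω ⊆ S ∪ ball x (θ*ρ) := by
          intro z hz
          by_cases h : z ∈ ball x (θ*ρ)
          · exact Or.inr h
          · exact Or.inl ⟨hz, h⟩
        exact (content_mono hsub2).trans ((content_union_le _ _).trans
          (add_le_add le_rfl (content_le_of_subset_ball hβpos subset_rfl)))
      have h3 : ENNReal.ofReal ((C/2) * ρ^β) ≤ hausdorffContent d β S := by
        have hle : (θ*ρ)^β ≤ (C/2) * ρ^β := by
          rw [Real.mul_rpow hθ0.le hρ0.le]
          exact mul_le_mul_of_nonneg_right hθβ (Real.rpow_nonneg hρ0.le β)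
        have h4 : ENNReal.ofReal ((C/2)*ρ^β) + ENNReal.ofReal ((θ*ρ)^β)
            ≤ ENNReal.ofReal (C * ρ^β) := by
          rw [← ENNReal.ofReal_add (by positivity) (by positivity)]
          apply ENNReal.ofReal_le_ofReal
          nlinarith [Real.rpow_nonneg hρ0.le β]
        have h5 := h4.trans (h1.trans h2)
        exact (ENNReal.add_le_add_iff_right ENNReal.ofReal_ne_top).1 h5
      have hSb : S ⊆ closedBall x ρ := fun z hz => ball_subset_closedBall hz.1.1
      obtain ⟨ν, hν1, hν2, hν3, hν4⟩ := scale_measure β hβpos x hρ0 S hSb h3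
      have hSann : closure S ⊆ {z : EuclideanSpace ℝ (Fin d) |
          θ * ρ ≤ dist z x ∧ dist z x ≤ ρ} := by
        refine closure_minimal ?_ ?_
        · intro z hz
          refine ⟨?_, ?_⟩
          · have hz2 := hz.2
            rw [mem_ball] at hz2
            push_neg at hz2
            exact hz2
          · exact mem_closedBall.1 (ball_subset_closedBall hz.1.1)
        · have hc1 : IsClosed {z : EuclideanSpace ℝ (Fin d) | θ * ρ ≤ dist z x} :=
            isClosed_le continuous_const (Continuous.dist continuous_id continuous_const)
          have hc2 : IsClosed {z : EuclideanSpace ℝ (Fin d) | dist z x ≤ ρ} :=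
            isClosed_le (Continuous.dist continuous_id continuous_const) continuous_const
          exact hc1.inter hc2
      refine ⟨ν, ?_, ?_, hν2, ?_, hν4⟩
      · refine measure_mono_null ?_ hν1
        intro z hz
        simp only [mem_compl_iff]
        intro hcl
        have hclΩ : closure S ⊆ Ωᶜ :=
          closure_minimal (fun w hw => hw.1.2) hΩ.isClosed_compl
        exact hclΩ hcl hz
      · refine measure_mono_null ?_ hν1
        intro z hz
        simp only [mem_compl_iff] at hz ⊢
        intro hcl
        exact hz (hSann hcl)
      · exact hν3
    choose ν hν0 hνann hνmass hνlow hνball using key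
    have hΛe0 : ENNReal.ofReal Λ ≠ 0 := by
      simp only [ne_eq, ENNReal.ofReal_eq_zero, not_le]
      exact hΛpos
    have hΛetop : ENNReal.ofReal Λ ≠ ∞ := ENNReal.ofReal_ne_top
    refine ⟨(ENNReal.ofReal Λ)⁻¹ • Measure.sum ν, ?_, ?_, ?_⟩
    · rw [Measure.smul_apply, Measure.sum_apply _ hΩ.measurableSet, smul_eq_mul]
      simp [hν0]
    · -- upper bound
      intro y r hr
      rw [Measure.smul_apply, Measure.sum_apply _ measurableSet_ball, smul_eq_mul]
      have hex : ∃ k : ℕ, t^(k+1) ≤ r := by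
        obtain ⟨n, hn⟩ := exists_pow_lt_of_lt_one hr ht1
        exact ⟨n, (pow_le_pow_of_le_one ht0.le ht1.le (Nat.le_succ n)).trans hn.le⟩
      set k₀ := Nat.find hex with hk₀def
      have hk₀1 : t^(k₀+1) ≤ r := Nat.find_spec hex
      have hk₀min : ∀ j, j < k₀ → r < t^(j+1) := by
        intro j hj
        have := Nat.find_min hex hj
        push_neg at this
        exact this
      have hmeet : ∀ k, ν k (ball y r) ≠ 0 →
          ∃ p, p ∈ ball y r ∧ θ * t^(k+1) ≤ dist p x ∧ dist p x ≤ t^(k+1) := by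
        intro k hk
        by_contra hcon
        push_neg at hcon
        apply hk
        refine measure_mono_null ?_ (hνann k)
        intro p hp
        simp only [mem_compl_iff, mem_setOf_eq, not_and]
        intro hp1 hp2
        exact absurd hp2 (not_le.2 (hcon p hp hp1))
      have hbig : ∀ k k', k < k' → k' < k₀ →
          ν k (ball y r) ≠ 0 → ν k' (ball y r) ≠ 0 → False := by
        intro k k' hkk' hk'0 hk hk'
        obtain ⟨p, hpball, hp1, hp2⟩ := hmeet k hk
        obtain ⟨q, hqball, hq1, hq2⟩ := hmeet k' hk'
        have hrk' : r < t^(k'+1) := hk₀min k' hk'0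
        have hle1 : t^(k'+1) ≤ t^(k+2) :=
          pow_le_pow_of_le_one ht0.le ht1.le (by omega)
        have hdpq : dist p q < 2*r := by
          have h1 : dist p y < r := mem_ball.1 hpball
          have h2 : dist y q < r := by rw [dist_comm]; exact mem_ball.1 hqball
          calc dist p q ≤ dist p y + dist y q := dist_triangle p y q
            _ < 2*r := by linarith
        have hbound : dist p x < 3 * t^(k+2) := by
          calc dist p x ≤ dist p q + dist q x := dist_triangle p q x
            _ < 2*r + t^(k+2) := by
                have := hq2.trans hle1
                linarith
            _ < 3*t^(k+2) := by nlinarith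
        have hpow : (3:ℝ) * t^(k+2) = (3*t) * t^(k+1) := by ring
        have h34 : 3 * t < θ := by rw [htdef]; linarith
        have hppos : (0:ℝ) < t^(k+1) := by positivity
        nlinarith
      set kb : ℕ := if hex2 : ∃ j, j < k₀ ∧ ν j (ball y r) ≠ 0 then hex2.choose else 0
        with hkbdef
      have hpt : ∀ k, ν k (ball y r)
          ≤ (if k = kb then (5:ℝ≥0∞)^d * ENNReal.ofReal ((2*r)^β) else 0)
            + (if k₀ ≤ k then ENNReal.ofReal (2^β) * (ENNReal.ofReal (t^β))^(k+1)
               else 0) := by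
        intro k
        rcases le_or_gt k₀ k with hk | hk
        · rw [if_pos hk]
          have hcalc : ν k (ball y r)
              ≤ ENNReal.ofReal (2^β) * (ENNReal.ofReal (t^β))^(k+1) := by
            calc ν k (ball y r) ≤ ν k univ := measure_mono (subset_univ _)
              _ ≤ ENNReal.ofReal ((2 * t^(k+1))^β) := hνmass k
              _ = ENNReal.ofReal (2^β) * (ENNReal.ofReal (t^β))^(k+1) := by
                  rw [Real.mul_rpow (by norm_num) (by positivity),
                    rpow_pow_aux ht0.le β (k+1),
                    ENNReal.ofReal_mul (by positivity),
                    ENNReal.ofReal_pow (by positivity)]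
          exact hcalc.trans (self_le_add_left _ _)
        · by_cases hz : ν k (ball y r) = 0
          · rw [hz]; exact zero_le
          · have hex2 : ∃ j, j < k₀ ∧ ν j (ball y r) ≠ 0 := ⟨k, hk, hz⟩
            have hkb : k = kb := by
              rw [hkbdef, dif_pos hex2]
              obtain ⟨h1, h2⟩ := hex2.choose_spec
              rcases lt_trichotomy k hex2.choose with h | h | h
              · exact (hbig k hex2.choose h h1 hz h2).elim
              · exact h
              · exact (hbig hex2.choose k h hk h2 hz).elim
            rw [if_pos hkb]
            exact le_add_of_le_of_nonneg (hνball k y r hr) zero_le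
      have hsum := ENNReal.tsum_le_tsum hpt
      rw [ENNReal.tsum_add, tsum_ite_eq] at hsum
      have hgeo : ∑' k : ℕ, (if k₀ ≤ k
            then ENNReal.ofReal (2^β) * (ENNReal.ofReal (t^β))^(k+1) else 0)
          ≤ ENNReal.ofReal (2^β)
            * ((ENNReal.ofReal (t^β))^(k₀+1) * (1 - ENNReal.ofReal (t^β))⁻¹) := by
        have hcongr : ∀ k:ℕ, (if k₀ ≤ k
              then ENNReal.ofReal (2^β) * (ENNReal.ofReal (t^β))^(k+1) else 0)
            = ENNReal.ofReal (2^β)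
              * (if k₀ ≤ k then (ENNReal.ofReal (t^β))^(k+1) else 0) := by
          intro k; by_cases h : k₀ ≤ k <;> simp [h]
        rw [tsum_congr hcongr, ENNReal.tsum_mul_left]
        exact mul_le_mul' le_rfl (tsum_geom_tail _ _)
      have hX1 : (ENNReal.ofReal (t^β))^(k₀+1) ≤ ENNReal.ofReal (r^β) := by
        rw [← ENNReal.ofReal_pow (by positivity), ← rpow_pow_aux ht0.le β (k₀+1)]
        exact ENNReal.ofReal_le_ofReal
          (Real.rpow_le_rpow (by positivity) hk₀1 hβpos.le)
      have hY : (1 - ENNReal.ofReal (t^β))⁻¹ = ENNReal.ofReal ((1 - t^β)⁻¹) := by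
        rw [← ENNReal.ofReal_one, ← ENNReal.ofReal_sub _ htβpos.le,
          ← ENNReal.ofReal_inv_of_pos h1t]
      have hA : (5:ℝ≥0∞)^d * ENNReal.ofReal ((2*r)^β)
          ≤ ENNReal.ofReal ((5:ℝ)^d * (2^β * r^β)) := by
        rw [h5e, ← ENNReal.ofReal_mul (by positivity)]
        apply ENNReal.ofReal_le_ofReal
        rw [Real.mul_rpow (by norm_num) hr.le]
      have hB : ENNReal.ofReal (2^β)
            * ((ENNReal.ofReal (t^β))^(k₀+1) * (1 - ENNReal.ofReal (t^β))⁻¹)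
          ≤ ENNReal.ofReal (2^β * ((1 - t^β)⁻¹ * r^β)) := by
        rw [hY]
        calc ENNReal.ofReal (2^β)
              * ((ENNReal.ofReal (t^β))^(k₀+1) * ENNReal.ofReal ((1 - t^β)⁻¹))
            ≤ ENNReal.ofReal (2^β)
              * (ENNReal.ofReal (r^β) * ENNReal.ofReal ((1 - t^β)⁻¹)) := by
              exact mul_le_mul' le_rfl (mul_le_mul' hX1 le_rfl)
          _ = ENNReal.ofReal (2^β * ((1 - t^β)⁻¹ * r^β)) := by
              rw [← ENNReal.ofReal_mul (by positivity),
                ← ENNReal.ofReal_mul (by positivity)]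
              ring_nf
      have htotal : ∑' k, ν k (ball y r) ≤ ENNReal.ofReal (Λ * r^β) := by
        refine hsum.trans ?_
        refine (add_le_add hA (hgeo.trans hB)).trans ?_
        rw [← ENNReal.ofReal_add (by positivity) (by positivity)]
        apply ENNReal.ofReal_le_ofReal
        rw [hΛdef]
        ring_nf
        exact le_rfl
      calc (ENNReal.ofReal Λ)⁻¹ * ∑' k, ν k (ball y r)
          ≤ (ENNReal.ofReal Λ)⁻¹ * ENNReal.ofReal (Λ * r^β) := mul_le_mul' le_rfl htotal
        _ = ENNReal.ofReal (r^β) := by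
            rw [ENNReal.ofReal_mul hΛpos.le, ← mul_assoc,
              ENNReal.inv_mul_cancel hΛe0 hΛetop, one_mul]
    · -- lower bound
      intro r hr0 hr1
      rw [Measure.smul_apply, Measure.sum_apply _ measurableSet_ball, smul_eq_mul]
      have hex : ∃ k : ℕ, t^(k+1) < r := by
        obtain ⟨n, hn⟩ := exists_pow_lt_of_lt_one hr0 ht1
        exact ⟨n, (pow_le_pow_of_le_one ht0.le ht1.le (Nat.le_succ n)).trans_lt hn⟩
      set k₁ := Nat.find hex with hk₁def
      have hk₁lt : t^(k₁+1) < r := Nat.find_spec hex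
      have htr : t * r ≤ t^(k₁+1) := by
        rcases Nat.eq_zero_or_pos k₁ with h0 | hpos
        · rw [h0, pow_one]
          nlinarith
        · obtain ⟨j, hj⟩ := Nat.exists_eq_succ_of_ne_zero hpos.ne'
          have hmin := Nat.find_min hex (by omega : j < k₁)
          push_neg at hmin
          rw [hj]
          calc t * r ≤ t * t^(j+1) := by nlinarith
            _ = t^(j+1+1) := by ring
      have hterm : ν k₁ univ ≤ ν k₁ (ball x r) := by
        have hcover : (univ : Set (EuclideanSpace ℝ (Fin d)))
            ⊆ ball x r ∪ ({z : EuclideanSpace ℝ (Fin d) |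
              θ * t^(k₁+1) ≤ dist z x ∧ dist z x ≤ t^(k₁+1)}ᶜ) := by
          intro z _
          by_cases hz : θ * t^(k₁+1) ≤ dist z x ∧ dist z x ≤ t^(k₁+1)
          · exact Or.inl (mem_ball.2 (lt_of_le_of_lt hz.2 hk₁lt))
          · exact Or.inr hz
        calc ν k₁ univ
            ≤ ν k₁ (ball x r ∪ ({z : EuclideanSpace ℝ (Fin d) |
              θ * t^(k₁+1) ≤ dist z x ∧ dist z x ≤ t^(k₁+1)}ᶜ)) := measure_mono hcover
          _ ≤ ν k₁ (ball x r) + ν k₁ ({z : EuclideanSpace ℝ (Fin d) |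
              θ * t^(k₁+1) ≤ dist z x ∧ dist z x ≤ t^(k₁+1)}ᶜ) := measure_union_le _ _
          _ = ν k₁ (ball x r) := by rw [hνann k₁, add_zero]
      have hGpos : (0:ℝ) < (5:ℝ)^d * γ := by positivity
      have hlow2 : ENNReal.ofReal ((C/2) * (t^(k₁+1))^β / ((5:ℝ)^d * γ))
          ≤ ν k₁ univ := by
        have h1 : ENNReal.ofReal ((C/2) * (t^(k₁+1))^β)
            ≤ ν k₁ univ * ENNReal.ofReal ((5:ℝ)^d * γ) := by
          have := hνlow k₁
          rw [h5e, ← mul_assoc, ← ENNReal.ofReal_mul (by positivity)] at this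
          rwa [mul_comm (ENNReal.ofReal ((5:ℝ)^d * γ)) ((ν k₁) univ)] at this
        rw [ENNReal.ofReal_div_of_pos hGpos]
        exact (ENNReal.div_le_iff_le_mul
          (Or.inl (by simp only [ne_eq, ENNReal.ofReal_eq_zero, not_le]; exact hGpos))
          (Or.inl ENNReal.ofReal_ne_top)).2 h1
      have hmono : ENNReal.ofReal ((C/2) * (t*r)^β / ((5:ℝ)^d * γ))
          ≤ ENNReal.ofReal ((C/2) * (t^(k₁+1))^β / ((5:ℝ)^d * γ)) := by
        apply ENNReal.ofReal_le_ofReal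
        have h1 : (t*r)^β ≤ (t^(k₁+1))^β :=
          Real.rpow_le_rpow (by positivity) htr hβpos.le
        have h2 : (0:ℝ) < ((5:ℝ)^d * γ)⁻¹ := by positivity
        rw [div_eq_mul_inv, div_eq_mul_inv]
        exact mul_le_mul_of_nonneg_right (mul_le_mul_of_nonneg_left h1 hCpos2.le) h2.le
      have hstep : ENNReal.ofReal (cv * r^β) * ENNReal.ofReal Λ
          ≤ ENNReal.ofReal ((C/2) * (t*r)^β / ((5:ℝ)^d * γ)) := by
        rw [← ENNReal.ofReal_mul (by positivity)]
        apply ENNReal.ofReal_le_ofReal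
        apply le_of_eq
        have hkey : cv * r ^ β * Λ = (Λ⁻¹ * Λ) * ((C/2) * t^β / ((5:ℝ)^d*γ)) * r^β := by
          rw [hcvdef]; ring
        rw [Real.mul_rpow ht0.le hr0.le, hkey, inv_mul_cancel₀ hΛpos.ne', one_mul]
        ring
      have hfinal : ENNReal.ofReal (cv * r^β) ≤ (ENNReal.ofReal Λ)⁻¹ * ν k₁ (ball x r) := by
        have h1 : ENNReal.ofReal (cv * r^β) * ENNReal.ofReal Λ ≤ ν k₁ (ball x r) :=
          hstep.trans (hmono.trans (hlow2.trans hterm))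
        calc ENNReal.ofReal (cv * r^β)
            = (ENNReal.ofReal Λ)⁻¹ * (ENNReal.ofReal (cv * r^β) * ENNReal.ofReal Λ) := by
              rw [mul_comm (ENNReal.ofReal (cv * r^β)) _, ← mul_assoc,
                ENNReal.inv_mul_cancel hΛe0 hΛetop, one_mul]
          _ ≤ (ENNReal.ofReal Λ)⁻¹ * ν k₁ (ball x r) := mul_le_mul' le_rfl h1
      exact hfinal.trans (mul_le_mul' le_rfl (ENNReal.le_tsum k₁))
end
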